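/- arXiv:2001.01607 — 2 statements merged into one kernel-verified Lean document; each statement's English description precedes it below -/
import Mathlib

section
/- Let G be a graph and let k ≥ 2 and s ≥ 1 be integers. If G does not contain a clique on k vertices nor a minimal separator of size larger than s, then the treewidth of G is at most (k−1)·s^3 − 1. -/
open SimpleGraph

variable {V : Type} [Fintype V] [DecidableEq V]

/-- `p` is a chordless (induced) path in `G`: a path such that the only edges of `G`
between its vertices are the edges of the path. -/
def IsInducedPathW (G : SimpleGraph V) {a b : V} (p : G.Walk a b) : Prop :=
  p.IsPath ∧ ∀ u v : V, u ∈ p.support → v ∈ p.support → G.Adj u v → p.toSubgraph.Adj u v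

/-- A hole of length `n` in `G`: an induced (chordless) cycle of length `n ≥ 4`,
given by an injection of `ZMod n` into `G` whose adjacencies are exactly the consecutive ones. -/
def IsHoleEmb (G : SimpleGraph V) (n : ℕ) (f : ZMod n → V) : Prop :=
  4 ≤ n ∧ Function.Injective f ∧
    ∀ i j : ZMod n, G.Adj (f i) (f j) ↔ (j = i + 1 ∨ i = j + 1)

/-- `G` contains an even hole (induced even cycle of length at least 4). -/
def ContainsEvenHole (G : SimpleGraph V) : Prop :=
  ∃ (n : ℕ) (f : ZMod n → V), IsHoleEmb G n f ∧ Even n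

/-- `G` contains a square (hole of length 4). -/
def ContainsSquare (G : SimpleGraph V) : Prop :=
  ∃ f : ZMod 4 → V, IsHoleEmb G 4 f

/-- `G` contains a theta as an induced subgraph: three internally vertex-disjoint chordless
paths from `a` to `b`, each of length at least 2, with no edges between the paths other than
those incident to `a` or `b` specified by the paths. -/
def ContainsTheta (G : SimpleGraph V) : Prop :=
  ∃ (a b : V) (p₁ p₂ p₃ : G.Walk a b),
    (IsInducedPathW G p₁ ∧ IsInducedPathW G p₂ ∧ IsInducedPathW G p₃) ∧
    (2 ≤ p₁.length ∧ 2 ≤ p₂.length ∧ 2 ≤ p₃.length) ∧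
    (∀ w : V, ((w ∈ p₁.support ∧ w ∈ p₂.support) ∨ (w ∈ p₁.support ∧ w ∈ p₃.support) ∨
          (w ∈ p₂.support ∧ w ∈ p₃.support)) → (w = a ∨ w = b)) ∧
    (∀ u w : V, u ≠ a → u ≠ b → w ≠ a → w ≠ b →
      ((u ∈ p₁.support ∧ w ∈ p₂.support) ∨ (u ∈ p₁.support ∧ w ∈ p₃.support) ∨
       (u ∈ p₂.support ∧ w ∈ p₃.support)) → ¬G.Adj u w)

/-- `G` contains a prism as an induced subgraph. -/
def ContainsPrism (G : SimpleGraph V) : Prop :=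
  ∃ (a₁ b₁ a₂ b₂ a₃ b₃ : V) (p₁ : G.Walk a₁ b₁) (p₂ : G.Walk a₂ b₂) (p₃ : G.Walk a₃ b₃),
    (IsInducedPathW G p₁ ∧ IsInducedPathW G p₂ ∧ IsInducedPathW G p₃) ∧
    (1 ≤ p₁.length ∧ 1 ≤ p₂.length ∧ 1 ≤ p₃.length) ∧
    (G.Adj a₁ a₂ ∧ G.Adj a₂ a₃ ∧ G.Adj a₁ a₃) ∧
    (G.Adj b₁ b₂ ∧ G.Adj b₂ b₃ ∧ G.Adj b₁ b₃) ∧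
    (∀ w : V, ¬(w ∈ p₁.support ∧ w ∈ p₂.support) ∧ ¬(w ∈ p₁.support ∧ w ∈ p₃.support) ∧
          ¬(w ∈ p₂.support ∧ w ∈ p₃.support)) ∧
    (∀ u w : V, u ∈ p₁.support → w ∈ p₂.support → G.Adj u w →
      (u = a₁ ∧ w = a₂) ∨ (u = b₁ ∧ w = b₂)) ∧
    (∀ u w : V, u ∈ p₁.support → w ∈ p₃.support → G.Adj u w →
      (u = a₁ ∧ w = a₃) ∨ (u = b₁ ∧ w = b₃)) ∧
    (∀ u w : V, u ∈ p₂.support → w ∈ p₃.support → G.Adj u w →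
      (u = a₂ ∧ w = a₃) ∨ (u = b₂ ∧ w = b₃))

/-- `G` contains a pyramid as an induced subgraph. -/
def ContainsPyramid (G : SimpleGraph V) : Prop :=
  ∃ (a b₁ b₂ b₃ : V) (p₁ : G.Walk a b₁) (p₂ : G.Walk a b₂) (p₃ : G.Walk a b₃),
    (IsInducedPathW G p₁ ∧ IsInducedPathW G p₂ ∧ IsInducedPathW G p₃) ∧
    (1 ≤ p₁.length ∧ 1 ≤ p₂.length ∧ 1 ≤ p₃.length) ∧
    ((2 ≤ p₁.length ∧ 2 ≤ p₂.length) ∨ (2 ≤ p₁.length ∧ 2 ≤ p₃.length) ∨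
     (2 ≤ p₂.length ∧ 2 ≤ p₃.length)) ∧
    (G.Adj b₁ b₂ ∧ G.Adj b₂ b₃ ∧ G.Adj b₁ b₃) ∧
    (∀ w : V, ((w ∈ p₁.support ∧ w ∈ p₂.support) ∨ (w ∈ p₁.support ∧ w ∈ p₃.support) ∨
          (w ∈ p₂.support ∧ w ∈ p₃.support)) → w = a) ∧
    (∀ u w : V, u ∈ p₁.support → w ∈ p₂.support → u ≠ a → w ≠ a → G.Adj u w →
      u = b₁ ∧ w = b₂) ∧
    (∀ u w : V, u ∈ p₁.support → w ∈ p₃.support → u ≠ a → w ≠ a → G.Adj u w →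
      u = b₁ ∧ w = b₃) ∧
    (∀ u w : V, u ∈ p₂.support → w ∈ p₃.support → u ≠ a → w ≠ a → G.Adj u w →
      u = b₂ ∧ w = b₃)

/-- `G` contains the cube as an induced subgraph: a hole of length 6 together with
two non-adjacent vertices `u, v` outside it, `u` adjacent to the even positions and
`v` adjacent to the odd positions. -/
def ContainsCube (G : SimpleGraph V) : Prop :=
  ∃ (f : ZMod 6 → V) (u v : V), IsHoleEmb G 6 f ∧
    u ∉ Set.range f ∧ v ∉ Set.range f ∧ ¬G.Adj u v ∧
    (∀ m : ZMod 6, G.Adj u (f m) ↔ (m = 0 ∨ m = 2 ∨ m = 4)) ∧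
    (∀ m : ZMod 6, G.Adj v (f m) ↔ (m = 1 ∨ m = 3 ∨ m = 5))

/-- `G` contains an even wheel: a hole plus a vertex outside it having at least 3 and
an even number of neighbors on the hole. -/
def ContainsEvenWheel (G : SimpleGraph V) : Prop :=
  ∃ (n : ℕ) (f : ZMod n → V) (u : V), IsHoleEmb G n f ∧ u ∉ Set.range f ∧
    3 ≤ {m : ZMod n | G.Adj u (f m)}.ncard ∧ Even {m : ZMod n | G.Adj u (f m)}.ncard

/-- `G` contains a butterfly: a wheel `(H,v)` with `N_H(v) = {a,b,c,d}`,
`ab, cd ∈ E(G)` and `bc, da ∉ E(G)`. -/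
def ContainsButterfly (G : SimpleGraph V) : Prop :=
  ∃ (n : ℕ) (f : ZMod n → V) (u : V), IsHoleEmb G n f ∧ u ∉ Set.range f ∧
    ∃ i j : ZMod n, i ≠ j ∧ i ≠ j + 1 ∧ i + 1 ≠ j ∧ i + 1 ≠ j + 1 ∧
      ¬G.Adj (f (i + 1)) (f j) ∧ ¬G.Adj (f (j + 1)) (f i) ∧
      (∀ m : ZMod n, G.Adj u (f m) ↔ (m = i ∨ m = i + 1 ∨ m = j ∨ m = j + 1))

/-- A 2-wheel in `G`: a hole `f` together with two distinct centers `u, v` outside the hole,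
each having at least three neighbors on the hole. -/
def Is2WheelCfg (G : SimpleGraph V) (n : ℕ) (f : ZMod n → V) (u v : V) : Prop :=
  IsHoleEmb G n f ∧ u ≠ v ∧ u ∉ Set.range f ∧ v ∉ Set.range f ∧
  3 ≤ {m : ZMod n | G.Adj u (f m)}.ncard ∧ 3 ≤ {m : ZMod n | G.Adj v (f m)}.ncard

/-- The 2-wheel `(f, {u,v})` is nested: the hole splits at `f i` and `f (i+d)` into two arcs,
with all neighbors of `u` on one arc and all neighbors of `v` on the other. -/
def NestedCfg (G : SimpleGraph V) (n : ℕ) (f : ZMod n → V) (u v : V) : Prop :=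
  ∃ (i : ZMod n) (d : ℕ), 1 ≤ d ∧ d < n ∧
    (∀ m : ZMod n, G.Adj u (f m) → ∃ e : ℕ, e ≤ d ∧ m = i + (e : ZMod n)) ∧
    (∀ m : ZMod n, G.Adj v (f m) → ∃ e : ℕ, e ≤ n - d ∧ m = i + (d : ZMod n) + (e : ZMod n))

/-- The 2-wheel `(f, {u,v})` is the cube. -/
def CubeCfg (G : SimpleGraph V) (n : ℕ) (f : ZMod n → V) (u v : V) : Prop :=
  n = 6 ∧ ∃ i : ZMod n,
    (∀ m : ZMod n, G.Adj u (f m) ↔ (m = i ∨ m = i + 2 ∨ m = i + 4)) ∧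
    (∀ m : ZMod n, G.Adj v (f m) ↔ (m = i + 1 ∨ m = i + 3 ∨ m = i + 5))

/-- The 2-wheel `(f, {u,v})` is a cousin wheel: `N_H(u) = {h₁,h₂,h₃}` and
`N_H(v) = {h₂,h₃,h₄}` for four consecutive vertices of the hole (or with `u, v` swapped). -/
def CousinCfg (G : SimpleGraph V) (n : ℕ) (f : ZMod n → V) (u v : V) : Prop :=
  (∃ i : ZMod n,
    (∀ m : ZMod n, G.Adj u (f m) ↔ (m = i ∨ m = i + 1 ∨ m = i + 2)) ∧
    (∀ m : ZMod n, G.Adj v (f m) ↔ (m = i + 1 ∨ m = i + 2 ∨ m = i + 3))) ∨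
  (∃ i : ZMod n,
    (∀ m : ZMod n, G.Adj v (f m) ↔ (m = i ∨ m = i + 1 ∨ m = i + 2)) ∧
    (∀ m : ZMod n, G.Adj u (f m) ↔ (m = i + 1 ∨ m = i + 2 ∨ m = i + 3)))

/-- A `u`-sector of the hole `f`: a subpath from `f i` to `f (i+d)` (`1 ≤ d < n`)
whose two ends are adjacent to `u` and whose internal vertices are not. -/
def IsSector (G : SimpleGraph V) (n : ℕ) (f : ZMod n → V) (u : V) (i : ZMod n) (d : ℕ) : Prop :=
  1 ≤ d ∧ d < n ∧ G.Adj u (f i) ∧ G.Adj u (f (i + (d : ZMod n))) ∧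
    ∀ m : ℕ, 0 < m → m < d → ¬G.Adj u (f (i + (m : ZMod n)))

/-- The class 𝒞: (theta, prism, pyramid, butterfly)-free graphs in which every 2-wheel
with non-adjacent centers is a nested wheel or a cousin wheel. -/
def InClassC (G : SimpleGraph V) : Prop :=
  ¬ContainsTheta G ∧ ¬ContainsPrism G ∧ ¬ContainsPyramid G ∧ ¬ContainsButterfly G ∧
  ∀ (n : ℕ) (f : ZMod n → V) (u v : V), Is2WheelCfg G n f u v → ¬G.Adj u v →
    (NestedCfg G n f u v ∨ CousinCfg G n f u v)

/-- `G` contains `S_{k,k,k}` as an induced subgraph: a root `r` and three legs of `k` edges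
each, with no other adjacencies among these vertices. -/
def ContainsSpider (G : SimpleGraph V) (k : ℕ) : Prop :=
  ∃ (r : V) (f : Fin 3 → Fin k → V),
    (∀ (j : Fin 3) (m : Fin k), f j m ≠ r) ∧
    (∀ (j₁ : Fin 3) (m₁ : Fin k) (j₂ : Fin 3) (m₂ : Fin k),
      f j₁ m₁ = f j₂ m₂ → j₁ = j₂ ∧ m₁ = m₂) ∧
    (∀ (j : Fin 3) (m : Fin k), G.Adj r (f j m) ↔ (m : ℕ) = 0) ∧
    (∀ (j₁ : Fin 3) (m₁ : Fin k) (j₂ : Fin 3) (m₂ : Fin k),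
      G.Adj (f j₁ m₁) (f j₂ m₂) ↔
        (j₁ = j₂ ∧ ((m₁ : ℕ) + 1 = (m₂ : ℕ) ∨ (m₂ : ℕ) + 1 = (m₁ : ℕ))))

/-- A `k`-span-wheel in `G`: a hole `f` of length `n`, with `x = f 0` and `y = f p`
non-adjacent, the two paths `P_A = f 0, f 1, …, f p` and `P_B = f 0, f (n-1), …, f p`,
and centers `c 0, …, c (k-1)` outside the hole such that `{c i} ∪ {x,y}` is independent,
every center has at least three neighbors on the hole and neighbors in the interiors of
both `P_A` and `P_B`, and the neighbors of the centers appear along both `P_A` and `P_B`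
(from `x` to `y`) in the order of the centers. -/
def IsSpanWheel (G : SimpleGraph V) (k n p : ℕ) (f : ZMod n → V) (c : Fin k → V) : Prop :=
  IsHoleEmb G n f ∧
  2 ≤ p ∧ p ≤ n - 2 ∧
  ¬G.Adj (f 0) (f (p : ZMod n)) ∧
  Function.Injective c ∧
  (∀ i : Fin k, c i ∉ Set.range f) ∧
  (∀ i j : Fin k, i ≠ j → ¬G.Adj (c i) (c j)) ∧
  (∀ i : Fin k, ¬G.Adj (c i) (f 0)) ∧
  (∀ i : Fin k, ¬G.Adj (c i) (f (p : ZMod n))) ∧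
  (∀ i : Fin k, 3 ≤ {m : ZMod n | G.Adj (c i) (f m)}.ncard) ∧
  (∀ i : Fin k, ∃ a : ℕ, 0 < a ∧ a < p ∧ G.Adj (c i) (f (a : ZMod n))) ∧
  (∀ i : Fin k, ∃ b : ℕ, p < b ∧ b < n ∧ G.Adj (c i) (f (b : ZMod n))) ∧
  (∀ i j : Fin k, i < j → ∀ a₁ a₂ : ℕ, a₁ ≤ p → a₂ ≤ p →
    G.Adj (c i) (f (a₁ : ZMod n)) → G.Adj (c j) (f (a₂ : ZMod n)) → a₁ ≤ a₂) ∧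
  (∀ i j : Fin k, i < j → ∀ b₁ b₂ : ℕ, p ≤ b₁ → b₁ ≤ n → p ≤ b₂ → b₂ ≤ n →
    G.Adj (c i) (f (b₁ : ZMod n)) → G.Adj (c j) (f (b₂ : ZMod n)) → b₂ ≤ b₁)

/-- `X` separates `s` from `t` in `G`: neither is in `X` and every walk from `s` to `t`
meets `X`. -/
def Separates (G : SimpleGraph V) (X : Set V) (s t : V) : Prop :=
  s ∉ X ∧ t ∉ X ∧ ∀ p : G.Walk s t, ∃ w ∈ p.support, w ∈ X

/-- `X` is a minimal separator of `G`: for some pair `s, t` it is an inclusion-wise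
minimal `st`-separator. -/
def MinSeparator (G : SimpleGraph V) (X : Set V) : Prop :=
  ∃ s t : V, Separates G X s t ∧ ∀ Y ⊆ X, Separates G Y s t → Y = X

/-- `A` is a connected component of `G ∖ C` that is full to `C`. -/
def IsFullComponent (G : SimpleGraph V) (C A : Set V) : Prop :=
  A.Nonempty ∧ Disjoint A C ∧ (G.induce A).Connected ∧
  (∀ a ∈ A, ∀ w : V, G.Adj a w → w ∈ A ∪ C) ∧
  (∀ x ∈ C, ∃ a ∈ A, G.Adj x a)

/-- A tree decomposition of `G` with tree `T` and bags `B`. -/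
def IsTreeDecomp (G : SimpleGraph V) {ι : Type} (T : SimpleGraph ι) (B : ι → Finset V) : Prop :=
  T.IsTree ∧
  (∀ v : V, ∃ i, v ∈ B i) ∧
  (∀ u v : V, G.Adj u v → ∃ i, u ∈ B i ∧ v ∈ B i) ∧
  (∀ (v : V) (i j : ι), v ∈ B i → v ∈ B j →
    ∀ (p : T.Walk i j), p.IsPath → ∀ x ∈ p.support, v ∈ B x)

/-- The treewidth of a finite graph: the least `w` such that `G` has a tree decomposition
all of whose bags have size at most `w + 1`. -/
noncomputable def treewidth (G : SimpleGraph V) : ℕ :=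
  sInf {w : ℕ | ∃ (m : ℕ) (T : SimpleGraph (Fin m)) (B : Fin m → Finset V),
    IsTreeDecomp G T B ∧ ∀ i, (B i).card ≤ w + 1}

/-- A graph is chordal iff it has no hole. -/
def IsChordal (G : SimpleGraph V) : Prop :=
  ¬∃ (n : ℕ) (f : ZMod n → V), IsHoleEmb G n f

/-- `H` is obtained from `G` by a minimal fill-in (minimal chordal completion). -/
def IsMinimalChordalCompletion (G H : SimpleGraph V) : Prop :=
  G ≤ H ∧ IsChordal H ∧ ∀ H' : SimpleGraph V, G ≤ H' → H' ≤ H → IsChordal H' → H' = H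

/-- `Ω` is a potential maximal clique of `G`: a maximal clique of some minimal chordal
completion of `G`. -/
def IsPMC (G : SimpleGraph V) (Ω : Set V) : Prop :=
  ∃ H : SimpleGraph V, IsMinimalChordalCompletion G H ∧ H.IsClique Ω ∧
    ∀ Ω' : Set V, H.IsClique Ω' → Ω ⊆ Ω' → Ω' = Ω

/-- `n` satisfies the Ramsey property for `(t, k)`: every graph on `n` vertices has a
clique of size `t` or an independent set of size `k`. -/
def RamseyProp (n t k : ℕ) : Prop :=
  ∀ G : SimpleGraph (Fin n),
    (∃ S : Finset (Fin n), G.IsNClique t S) ∨ (∃ S : Finset (Fin n), Gᶜ.IsNClique k S)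

/-- The Ramsey number `R(t, k)`. -/
noncomputable def ramseyNumber (t k : ℕ) : ℕ := sInf {n : ℕ | RamseyProp n t k}

set_option linter.unusedSectionVars false

namespace S0
open Finset
open scoped Classical

variable {V : Type} [Fintype V] [DecidableEq V] (G : SimpleGraph V)

/-- Turn a refl-trans chain of adjacencies inside `P` into a walk supported in `P`. -/
lemma rtg_walk {P : V → Prop} {a b : V}
    (h : Relation.ReflTransGen (fun x y => G.Adj x y ∧ P x ∧ P y) a b) (ha : P a) :
    ∃ p : G.Walk a b, ∀ z ∈ p.support, P z := by
  induction h with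
  | refl => exact ⟨.nil, by simpa using ha⟩
  | @tail b c hab hbc ih =>
      obtain ⟨p, hp⟩ := ih
      refine ⟨p.concat hbc.1, ?_⟩
      intro z hz
      rw [SimpleGraph.Walk.support_concat] at hz
      rcases List.mem_append.1 hz with h' | h'
      · exact hp _ h'
      · rw [List.mem_singleton] at h'; subst h'; exact hbc.2.2

lemma walk_rtg {P : V → Prop} {a b : V} (p : G.Walk a b) (hp : ∀ z ∈ p.support, P z) :
    Relation.ReflTransGen (fun x y => G.Adj x y ∧ P x ∧ P y) a b := by
  induction p with
  | nil => exact .refl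
  | @cons u v w h q ih =>
      refine Relation.ReflTransGen.head ⟨h, hp _ (by simp), hp _ (by simp)⟩ (ih ?_)
      intro z hz
      exact hp _ (by simp [hz])

/-- Reachability through dead (non-`A`) vertices. -/
def DR (A : Finset V) : V → V → Prop :=
  Relation.ReflTransGen (fun x y => G.Adj x y ∧ x ∉ A ∧ y ∉ A)

lemma DR_symm {A : Finset V} {x y : V} (h : DR G A x y) : DR G A y x :=
  (@Relation.ReflTransGen.symmetric _ _ ⟨fun _ _ h => ⟨h.1.symm, h.2.2, h.2.1⟩⟩).symm _ _ h

lemma DR_trans {A : Finset V} {x y z : V} (h : DR G A x y) (h' : DR G A y z) : DR G A x z :=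
  h.trans h'

lemma DR_single {A : Finset V} {x y : V} (h : G.Adj x y) (hx : x ∉ A) (hy : y ∉ A) :
    DR G A x y :=
  Relation.ReflTransGen.single ⟨h, hx, hy⟩

lemma DR_mono {A A' : Finset V} (hAA : A' ⊆ A) {x y : V} (h : DR G A x y) : DR G A' x y := by
  induction h with
  | refl => exact .refl
  | tail _ h ih => exact ih.tail ⟨h.1, fun hc => h.2.1 (hAA hc), fun hc => h.2.2 (hAA hc)⟩

/-- Alive boundary of the dead region containing `r`. -/
noncomputable def Nrg (A : Finset V) (r : V) : Finset V :=
  A.filter (fun x => ∃ z, z ∉ A ∧ DR G A r z ∧ G.Adj z x)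

lemma mem_Nrg {A : Finset V} {r x : V} :
    x ∈ Nrg G A r ↔ x ∈ A ∧ ∃ z, z ∉ A ∧ DR G A r z ∧ G.Adj z x := by
  simp [Nrg]

lemma Nrg_subset {A : Finset V} {r : V} : Nrg G A r ⊆ A := filter_subset _ _

lemma Nrg_congr {A : Finset V} {r r' : V} (h : DR G A r r') : Nrg G A r = Nrg G A r' := by
  ext x
  simp only [mem_Nrg]
  constructor
  · rintro ⟨hx, z, hz, hrz, hadj⟩
    exact ⟨hx, z, hz, (DR_symm G h).trans hrz, hadj⟩
  · rintro ⟨hx, z, hz, hrz, hadj⟩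
    exact ⟨hx, z, hz, h.trans hrz, hadj⟩

/-- The filled graph of a state: alive vertices, original edges plus fills along dead regions. -/
def HG (A : Finset V) : SimpleGraph V where
  Adj x y := x ≠ y ∧ x ∈ A ∧ y ∈ A ∧
    (G.Adj x y ∨ ∃ r, r ∉ A ∧ x ∈ Nrg G A r ∧ y ∈ Nrg G A r)
  symm := by
    constructor
    rintro x y ⟨hne, hx, hy, h | ⟨r, hr, h1, h2⟩⟩
    · exact ⟨hne.symm, hy, hx, Or.inl h.symm⟩
    · exact ⟨hne.symm, hy, hx, Or.inr ⟨r, hr, h2, h1⟩⟩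
  loopless := ⟨by rintro x ⟨hne, _⟩; exact hne rfl⟩

lemma HG_adj_of_G {A : Finset V} {x y : V} (h : G.Adj x y) (hx : x ∈ A) (hy : y ∈ A) :
    (HG G A).Adj x y := ⟨h.ne, hx, hy, Or.inl h⟩

lemma HG_mem_left {A : Finset V} {x y : V} (h : (HG G A).Adj x y) : x ∈ A := h.2.1
lemma HG_mem_right {A : Finset V} {x y : V} (h : (HG G A).Adj x y) : y ∈ A := h.2.2.1

/-- Fills persist when passing to a smaller alive set. -/
lemma HG_anti {A A' : Finset V} (hAA : A' ⊆ A) {x y : V} (h : (HG G A).Adj x y)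
    (hx : x ∈ A') (hy : y ∈ A') : (HG G A').Adj x y := by
  obtain ⟨hne, _, _, hGadj | ⟨r, hr, h1, h2⟩⟩ := h
  · exact ⟨hne, hx, hy, Or.inl hGadj⟩
  · refine ⟨hne, hx, hy, Or.inr ⟨r, fun hc => hr (hAA hc), ?_, ?_⟩⟩
    · obtain ⟨_, z, hz, hrz, hadj⟩ := (mem_Nrg G).1 h1
      exact (mem_Nrg G).2 ⟨hx, z, fun hc => hz (hAA hc), DR_mono G hAA hrz, hadj⟩
    · obtain ⟨_, z, hz, hrz, hadj⟩ := (mem_Nrg G).1 h2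
      exact (mem_Nrg G).2 ⟨hy, z, fun hc => hz (hAA hc), DR_mono G hAA hrz, hadj⟩

/-- The state invariant: all dead regions have alive boundary of size at most `s`. -/
def Good (s : ℕ) (A : Finset V) : Prop := ∀ r, r ∉ A → (Nrg G A r).card ≤ s

lemma clique_of_subset_Nrg {A : Finset V} {r : V} (hr : r ∉ A) {K : Finset V}
    (hK : K ⊆ Nrg G A r) : (HG G A).IsClique ↑K := by
  intro x hx y hy hne
  exact ⟨hne, Nrg_subset G (hK hx), Nrg_subset G (hK hy), Or.inr ⟨r, hr, hK hx, hK hy⟩⟩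


/-! ### Projection of `G`-walks to `HG`-walks, and lifting back -/

/-- Chains in the filled graph avoiding a set `X`. -/
def RTGH (A : Finset V) (X : Set V) : V → V → Prop :=
  Relation.ReflTransGen (fun i j => (HG G A).Adj i j ∧ (i : V) ∉ X ∧ (j : V) ∉ X)

lemma project {A : Finset V} {X : Set V} :
    ∀ {x b : V} (p : G.Walk x b), b ∈ A → (∀ z ∈ p.support, z ∉ X) →
      ((x ∈ A → RTGH G A X x b) ∧
       (x ∉ A → ∀ a, a ∈ A → (a : V) ∉ X → a ∈ Nrg G A x → RTGH G A X a b)) := by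
  intro x b p
  induction p with
  | nil =>
      intro hb _
      refine ⟨fun _ => .refl, fun hx => absurd hb hx⟩
  | @cons x c b h q ih =>
      intro hb hX
      have hXq : ∀ z ∈ q.support, z ∉ X := fun z hz => hX z (by simp [hz])
      have hxX : x ∉ X := hX x (by simp)
      have hcX : c ∉ X := hX c (by simp)
      obtain ⟨ih1, ih2⟩ := ih hb hXq
      constructor
      · intro hx
        by_cases hc : c ∈ A
        · exact Relation.ReflTransGen.head ⟨HG_adj_of_G G h hx hc, hxX, hcX⟩ (ih1 hc)
        · refine ih2 hc x hx hxX ?_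
          exact (mem_Nrg G).2 ⟨hx, c, hc, .refl, h.symm⟩
      · intro hx a ha haX haN
        by_cases hc : c ∈ A
        · by_cases hac : a = c
          · subst hac; exact ih1 hc
          · have hcN : c ∈ Nrg G A x := (mem_Nrg G).2 ⟨hc, x, hx, .refl, h⟩
            have hadj : (HG G A).Adj a c := ⟨hac, ha, hc, Or.inr ⟨x, hx, haN, hcN⟩⟩
            exact Relation.ReflTransGen.head ⟨hadj, haX, hcX⟩ (ih1 hc)
        · refine ih2 hc a ha haX ?_
          obtain ⟨_, z, hz, hxz, hadj⟩ := (mem_Nrg G).1 haN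
          exact (mem_Nrg G).2 ⟨ha, z, hz, (DR_single G h.symm hc hx).trans hxz, hadj⟩

/-- If `X ⊆ A` separates in the filled graph, it separates in `G`. -/
lemma sep_project {A : Finset V} {X : Set V} {a b : V} (ha : a ∈ A) (hb : b ∈ A)
    (hsep : Separates (HG G A) X a b) : Separates G X a b := by
  refine ⟨hsep.1, hsep.2.1, fun p => ?_⟩
  by_contra hcon
  push_neg at hcon
  have hrtg : RTGH G A X a b := (project G p hb hcon).1 ha
  obtain ⟨q, hq⟩ := rtg_walk (HG G A) (P := fun z => (z : V) ∉ X) hrtg hsep.1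
  obtain ⟨w, hw1, hw2⟩ := hsep.2.2 q
  exact hq w hw1 hw2

/-- Lift a walk of the filled graph to a `G`-walk whose alive support is contained
in the original support. -/
lemma walk_lift {A : Finset V} {a b : V} (q : (HG G A).Walk a b) :
    ∃ p : G.Walk a b, ∀ z ∈ p.support, z ∈ A → z ∈ q.support := by
  induction q with
  | nil => exact ⟨.nil, by simp⟩
  | @cons a c b h q' ih =>
      obtain ⟨p', hp'⟩ := ih
      obtain ⟨hne, haA, hcA, hGadj | ⟨r, hr, h1, h2⟩⟩ := h
      · refine ⟨.cons hGadj p', ?_⟩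
        intro z hz hzA
        rw [SimpleGraph.Walk.support_cons, List.mem_cons] at hz
        rcases hz with rfl | hz'
        · simp
        · refine List.mem_cons.2 ?_
          right
          exact hp' z hz' hzA
      · obtain ⟨_, z1, hz1, hrz1, hadj1⟩ := (mem_Nrg G).1 h1
        obtain ⟨_, z2, hz2, hrz2, hadj2⟩ := (mem_Nrg G).1 h2
        have hdr : DR G A z1 z2 := (DR_symm G hrz1).trans hrz2
        obtain ⟨w, hw⟩ := rtg_walk G (P := fun z => z ∉ A) hdr hz1
        refine ⟨SimpleGraph.Walk.cons hadj1.symm (w.append (SimpleGraph.Walk.cons hadj2 p')), ?_⟩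
        intro z hz hzA
        simp only [SimpleGraph.Walk.support_cons, SimpleGraph.Walk.support_append,
          List.mem_cons, List.mem_append] at hz
        rcases hz with rfl | hz | hz
        · simp
        · exact absurd hzA (hw z hz)
        · have hz' : z ∈ (SimpleGraph.Walk.cons hadj2 p').support := List.mem_of_mem_tail hz
          rw [SimpleGraph.Walk.support_cons, List.mem_cons] at hz'
          rcases hz' with rfl | hz''
          · exact absurd hzA hz2
          · refine List.mem_cons.2 ?_
            right
            exact hp' z hz'' hzA

lemma sep_lift {A : Finset V} {Y : Set V} (hY : ∀ y ∈ Y, y ∈ A) {a b : V}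
    (hsep : Separates G Y a b) : Separates (HG G A) Y a b := by
  refine ⟨hsep.1, hsep.2.1, fun q => ?_⟩
  obtain ⟨p, hp⟩ := walk_lift G q
  obtain ⟨w, hw1, hw2⟩ := hsep.2.2 p
  exact ⟨w, hp w hw1 (hY w hw2), hw2⟩

/-! ### Minimal separators and the size bound -/

lemma sep_small {s : ℕ} (hsep : ¬∃ X : Set V, MinSeparator G X ∧ s < X.ncard)
    {X : Set V} {a b : V} (h : Separates G X a b) :
    ∃ Y : Finset V, ↑Y ⊆ X ∧ Separates G ↑Y a b ∧ Y.card ≤ s := by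
  push_neg at hsep
  have hXfin : (X.toFinset : Set V) = X := by simp
  set F : Finset (Finset V) := Finset.univ.filter (fun B => ↑B ⊆ X ∧ Separates G ↑B a b) with hF
  have hne : F.Nonempty := ⟨X.toFinset, by
    simp only [hF, mem_filter, Finset.mem_univ, true_and, hXfin]
    exact ⟨le_refl _, h⟩⟩
  obtain ⟨Y, hYF, hYmin⟩ := F.exists_minimal hne
  simp only [hF, mem_filter, Finset.mem_univ, true_and] at hYF
  have hmin : ∀ Z : Set V, Z ⊆ ↑Y → Separates G Z a b → Z = ↑Y := by
    intro Z hZY hZsep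
    by_contra hcon
    have hZfin : (Z.toFinset : Set V) = Z := by simp
    have hZF : Z.toFinset ∈ F := by
      simp only [hF, mem_filter, Finset.mem_univ, true_and, hZfin]
      exact ⟨hZY.trans hYF.1, hZsep⟩
    have hsub : Z.toFinset ⊆ Y := by
      rw [← Finset.coe_subset, hZfin]; exact hZY
    have hne' : Z.toFinset ≠ Y := fun he => hcon (by rw [← hZfin, he])
    exact hne' (Finset.Subset.antisymm hsub (hYmin hZF hsub))
  have hMS : MinSeparator G ↑Y := ⟨a, b, hYF.2, hmin⟩
  have := hsep ↑Y hMS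
  rw [Set.ncard_coe_finset] at this
  exact ⟨Y, hYF.1, hYF.2, this⟩


/-! ### The clique size bound for filled graphs -/

lemma DR_enrich {A : Finset V} {r a b : V} (h : DR G A a b) (hra : DR G A r a) :
    Relation.ReflTransGen
      (fun x y => G.Adj x y ∧ (x ∉ A ∧ DR G A r x) ∧ (y ∉ A ∧ DR G A r y)) a b := by
  induction h with
  | refl => exact .refl
  | @tail y z h1 h2 ih =>
      exact ih.tail ⟨h2.1, ⟨h2.2.1, hra.trans h1⟩, ⟨h2.2.2, (hra.trans h1).tail h2⟩⟩

lemma fill_walk {A : Finset V} {x z : V} (h : (HG G A).Adj x z) :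
    ∃ p : G.Walk x z,
      ∀ w ∈ p.support, w = x ∨ w = z ∨ (w ∉ A ∧ x ∈ Nrg G A w ∧ z ∈ Nrg G A w) := by
  obtain ⟨hne, hxA, hzA, hGadj | ⟨r, hr, h1, h2⟩⟩ := h
  · exact ⟨.cons hGadj .nil, by intro w hw; simp at hw; tauto⟩
  · obtain ⟨_, z1, hz1, hrz1, hadj1⟩ := (mem_Nrg G).1 h1
    obtain ⟨_, z2, hz2, hrz2, hadj2⟩ := (mem_Nrg G).1 h2
    have hdr : DR G A z1 z2 := (DR_symm G hrz1).trans hrz2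
    obtain ⟨ww, hww⟩ := rtg_walk G (P := fun w => w ∉ A ∧ DR G A r w)
      (DR_enrich G hdr hrz1) ⟨hz1, hrz1⟩
    refine ⟨.cons hadj1.symm (ww.append (.cons hadj2 .nil)), ?_⟩
    intro w hw
    simp only [SimpleGraph.Walk.support_cons, SimpleGraph.Walk.support_append,
      SimpleGraph.Walk.support_nil, List.tail_cons, List.mem_cons, List.mem_append,
      List.mem_singleton] at hw
    rcases hw with rfl | hw | hw
    · exact Or.inl rfl
    · obtain ⟨hwA, hwr⟩ := hww w hw
      refine Or.inr (Or.inr ⟨hwA, ?_, ?_⟩)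
      · rw [← Nrg_congr G hwr]; exact h1
      · rw [← Nrg_congr G hwr]; exact h2
    · simp only [List.mem_nil_iff, or_false] at hw
      subst hw
      exact Or.inr (Or.inl rfl)

lemma clique_small {k s : ℕ} (hk : 2 ≤ k) (hs : 1 ≤ s) (hclique : G.CliqueFree k)
    (hsep : ¬∃ X : Set V, MinSeparator G X ∧ s < X.ncard)
    {A : Finset V} (hGood : Good G s A) {K : Finset V}
    (hK : (HG G A).IsClique ↑K) : K.card ≤ (k - 1) * s ^ 3 := by
  have hs3 : 1 ≤ s ^ 3 := Nat.one_le_pow _ _ hs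
  have hk1 : 1 ≤ k - 1 := by omega
  by_cases hGc : ∀ x ∈ K, ∀ y ∈ K, x ≠ y → G.Adj x y
  · have hKG : G.IsClique ↑K := by
      intro x hx y hy hne
      exact hGc x (by exact_mod_cast hx) y (by exact_mod_cast hy) hne
    have hcard : K.card ≤ k - 1 := by
      by_contra hc
      push_neg at hc
      have hk' : k ≤ K.card := by omega
      obtain ⟨T, hTK, hTcard⟩ := Finset.exists_subset_card_eq hk'
      exact hclique T ⟨hKG.subset (by exact_mod_cast hTK), hTcard⟩
    calc K.card ≤ k - 1 := hcard
    _ = (k - 1) * 1 := (mul_one _).symm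
    _ ≤ (k - 1) * s ^ 3 := Nat.mul_le_mul_left _ hs3
  · push_neg at hGc
    obtain ⟨x, hxK, y, hyK, hxy, hnadj⟩ := hGc
    have hHxy : (HG G A).Adj x y := hK (by exact_mod_cast hxK) (by exact_mod_cast hyK) hxy
    have hs2 : 2 ≤ s := by
      obtain ⟨_, _, _, hor⟩ := hHxy
      rcases hor with h | ⟨r, hr, h1, h2⟩
      · exact absurd h hnadj
      · have hsub : ({x, y} : Finset V) ⊆ Nrg G A r := by
          intro w hw
          rcases Finset.mem_insert.1 hw with rfl | hw
          · exact h1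
          · rw [Finset.mem_singleton] at hw; subst hw; exact h2
        have h2le : 2 ≤ (Nrg G A r).card := by
          have hc2 : ({x, y} : Finset V).card = 2 := by
            rw [Finset.card_insert_of_notMem (by simp [hxy]), Finset.card_singleton]
          rw [← hc2]
          exact Finset.card_le_card hsub
        exact h2le.trans (hGood r hr)
    have hsepxy : Separates G {z : V | z ≠ x ∧ z ≠ y} x y := by
      refine ⟨by simp, by simp [Ne.symm hxy], fun p => ?_⟩
      cases p with
      | nil => exact absurd rfl hxy
      | @cons _ c _ h q =>
          by_cases hcy : c = y
          · subst hcy; exact absurd h hnadj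
          · exact ⟨c, by simp, h.ne', hcy⟩
    obtain ⟨Y, hYsub, hYsep, hYcard⟩ := sep_small G hsep hsepxy
    have hcover : K \ {x, y} ⊆ Y.biUnion (fun v => if v ∈ A then {v} else Nrg G A v) := by
      intro z hz
      obtain ⟨hzK, hzxy⟩ := Finset.mem_sdiff.1 hz
      have hzx : z ≠ x := fun hc => hzxy (by simp [hc])
      have hzy : z ≠ y := fun hc => hzxy (by simp [hc])
      have hHxz : (HG G A).Adj x z := hK (by exact_mod_cast hxK) (by exact_mod_cast hzK) (Ne.symm hzx)
      have hHzy : (HG G A).Adj z y := hK (by exact_mod_cast hzK) (by exact_mod_cast hyK) hzy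
      have hzA : z ∈ A := HG_mem_right G hHxz
      obtain ⟨p1, hp1⟩ := fill_walk G hHxz
      obtain ⟨p2, hp2⟩ := fill_walk G hHzy
      obtain ⟨v, hvsupp, hvY⟩ := hYsep.2.2 (p1.append p2)
      have hvY' : v ∈ Y := by exact_mod_cast hvY
      obtain ⟨hvx, hvy⟩ := hYsub hvY
      have hvprop : v = z ∨ (v ∉ A ∧ z ∈ Nrg G A v) := by
        rw [SimpleGraph.Walk.support_append, List.mem_append] at hvsupp
        rcases hvsupp with hv | hv
        · rcases hp1 v hv with rfl | rfl | ⟨h1, h2, h3⟩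
          · exact absurd rfl hvx
          · exact Or.inl rfl
          · exact Or.inr ⟨h1, h3⟩
        · have hv' := List.mem_of_mem_tail hv
          rcases hp2 v hv' with rfl | rfl | ⟨h1, h2, h3⟩
          · exact Or.inl rfl
          · exact absurd rfl hvy
          · exact Or.inr ⟨h1, h2⟩
      rw [Finset.mem_biUnion]
      refine ⟨v, hvY', ?_⟩
      rcases hvprop with rfl | ⟨hvA, hzN⟩
      · simp [hzA]
      · simp [hvA, hzN]
    have hcount : (K \ {x, y}).card ≤ s * s := by
      calc (K \ {x, y}).card ≤ (Y.biUnion (fun v => if v ∈ A then {v} else Nrg G A v)).card :=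
            Finset.card_le_card hcover
      _ ≤ ∑ v ∈ Y, (if v ∈ A then ({v} : Finset V) else Nrg G A v).card :=
            Finset.card_biUnion_le
      _ ≤ ∑ _v ∈ Y, s := by
            refine Finset.sum_le_sum ?_
            intro v hv
            by_cases hvA : v ∈ A
            · simp [hvA, hs]
            · simp only [hvA, if_false]
              exact hGood v hvA
      _ = Y.card * s := by rw [Finset.sum_const, smul_eq_mul]
      _ ≤ s * s := Nat.mul_le_mul_right _ hYcard
    have htot : K.card ≤ s * s + 2 := by
      have h1 : K ⊆ (K \ {x, y}) ∪ {x, y} := by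
        intro z hz
        by_cases hzz : z ∈ ({x, y} : Finset V)
        · exact Finset.mem_union_right _ hzz
        · exact Finset.mem_union_left _ (Finset.mem_sdiff.2 ⟨hz, hzz⟩)
      calc K.card ≤ ((K \ {x, y}) ∪ {x, y}).card := Finset.card_le_card h1
      _ ≤ (K \ {x, y}).card + ({x, y} : Finset V).card := Finset.card_union_le _ _
      _ ≤ s * s + 2 := by
            refine Nat.add_le_add hcount ?_
            exact (Finset.card_insert_le _ _).trans (by simp)
    refine htot.trans ?_
    have hss : s * s + 2 ≤ s ^ 3 := by nlinarith
    calc s * s + 2 ≤ s ^ 3 := hss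
    _ = 1 * s ^ 3 := (one_mul _).symm
    _ ≤ (k - 1) * s ^ 3 := Nat.mul_le_mul_right _ hk1


/-! ### Components outside a closed neighborhood in the filled graph -/

/-- Vertices of `A` outside the closed `HG`-neighborhood of `u`. -/
noncomputable def NW (A : Finset V) (u : V) : Finset V :=
  A.filter (fun x => x ≠ u ∧ ¬(HG G A).Adj u x)

/-- Reachability inside `NW`. -/
def HR (A : Finset V) (u : V) : V → V → Prop :=
  Relation.ReflTransGen (fun x y => (HG G A).Adj x y ∧ x ∈ NW G A u ∧ y ∈ NW G A u)

lemma HR_symm {A : Finset V} {u x y : V} (h : HR G A u x y) : HR G A u y x :=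
  (@Relation.ReflTransGen.symmetric _ _ ⟨fun _ _ h => ⟨h.1.symm, h.2.2, h.2.1⟩⟩).symm _ _ h

/-- The component of `w` in `NW`. -/
noncomputable def Dcomp (A : Finset V) (u w : V) : Finset V :=
  (NW G A u).filter (HR G A u w)

/-- The `HG`-neighborhood of the component of `w`. -/
noncomputable def NHD (A : Finset V) (u w : V) : Finset V :=
  A.filter (fun x => x ∉ Dcomp G A u w ∧ ∃ d ∈ Dcomp G A u w, (HG G A).Adj x d)

noncomputable def AD (A : Finset V) (u w : V) : Finset V := Dcomp G A u w ∪ NHD G A u w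

noncomputable def Acore (A : Finset V) (u : V) : Finset V := A \ NW G A u

section comps

variable {A : Finset V} {u w : V}

lemma mem_NW {x : V} : x ∈ NW G A u ↔ x ∈ A ∧ x ≠ u ∧ ¬(HG G A).Adj u x := by
  simp [NW]

lemma NW_subset : NW G A u ⊆ A := Finset.filter_subset _ _

lemma mem_Dcomp_self (hw : w ∈ NW G A u) : w ∈ Dcomp G A u w := by
  simp only [Dcomp, Finset.mem_filter]
  exact ⟨hw, Relation.ReflTransGen.refl⟩

lemma Dcomp_subset : Dcomp G A u w ⊆ NW G A u := Finset.filter_subset _ _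

lemma mem_Dcomp {x : V} : x ∈ Dcomp G A u w ↔ x ∈ NW G A u ∧ HR G A u w x := by
  simp [Dcomp]

lemma Dcomp_closed {d x : V} (hd : d ∈ Dcomp G A u w) (h : (HG G A).Adj d x)
    (hx : x ∈ NW G A u) : x ∈ Dcomp G A u w := by
  obtain ⟨hdNW, hHR⟩ := (mem_Dcomp G).1 hd
  exact (mem_Dcomp G).2 ⟨hx, hHR.tail ⟨h, hdNW, hx⟩⟩

lemma Dcomp_eq {d : V} (hd : d ∈ Dcomp G A u w) : Dcomp G A u d = Dcomp G A u w := by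
  obtain ⟨hdNW, hHR⟩ := (mem_Dcomp G).1 hd
  ext x
  simp only [mem_Dcomp]
  exact ⟨fun ⟨hx, h⟩ => ⟨hx, hHR.trans h⟩, fun ⟨hx, h⟩ => ⟨hx, (HR_symm G hHR).trans h⟩⟩

lemma Dcomp_disjoint {w' : V} (hne : Dcomp G A u w ≠ Dcomp G A u w') :
    ∀ x, x ∈ Dcomp G A u w → x ∉ Dcomp G A u w' := by
  intro x hx hx'
  exact hne ((Dcomp_eq G hx).symm.trans (Dcomp_eq G hx'))

lemma NHD_congr {w' : V} (h : Dcomp G A u w = Dcomp G A u w') :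
    NHD G A u w = NHD G A u w' := by
  unfold NHD; rw [h]

lemma AD_congr {w' : V} (h : Dcomp G A u w = Dcomp G A u w') :
    AD G A u w = AD G A u w' := by
  unfold AD; rw [h, NHD_congr G h]

lemma mem_NHD {x : V} : x ∈ NHD G A u w ↔
    x ∈ A ∧ x ∉ Dcomp G A u w ∧ ∃ d ∈ Dcomp G A u w, (HG G A).Adj x d := by
  simp [NHD]

lemma NHD_subset_A : NHD G A u w ⊆ A := Finset.filter_subset _ _

lemma AD_subset_A : AD G A u w ⊆ A :=
  Finset.union_subset ((Dcomp_subset G).trans (NW_subset G)) (NHD_subset_A G)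

lemma u_not_mem_NW : u ∉ NW G A u := by simp [mem_NW]

lemma u_not_mem_NHD : u ∉ NHD G A u w := by
  intro hu
  obtain ⟨_, _, d, hd, hadj⟩ := (mem_NHD G).1 hu
  obtain ⟨_, _, hnadj⟩ := (mem_NW G).1 (Dcomp_subset G hd)
  exact hnadj hadj

lemma u_not_mem_AD : u ∉ AD G A u w := by
  intro hu
  rcases Finset.mem_union.1 hu with h | h
  · exact u_not_mem_NW G (Dcomp_subset G h)
  · exact u_not_mem_NHD G h

lemma NHD_not_NW {x : V} (hx : x ∈ NHD G A u w) : x ∉ NW G A u := by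
  intro hNW
  obtain ⟨_, hnD, d, hd, hadj⟩ := (mem_NHD G).1 hx
  exact hnD (Dcomp_closed G hd hadj.symm hNW)

lemma NHD_adj_u (hu : u ∈ A) {x : V} (hx : x ∈ NHD G A u w) : (HG G A).Adj u x := by
  have hxA : x ∈ A := NHD_subset_A G hx
  have hxNW := NHD_not_NW G hx
  have hxu : x ≠ u := by
    rintro rfl; exact u_not_mem_NHD G hx
  rw [mem_NW] at hxNW
  push_neg at hxNW
  exact hxNW hxA hxu

lemma NHD_subset_Acore (hu : u ∈ A) : NHD G A u w ⊆ Acore G A u := by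
  intro x hx
  exact Finset.mem_sdiff.2 ⟨NHD_subset_A G hx, NHD_not_NW G hx⟩

lemma Acore_subset : Acore G A u ⊆ A := Finset.sdiff_subset

lemma u_mem_Acore (hu : u ∈ A) : u ∈ Acore G A u :=
  Finset.mem_sdiff.2 ⟨hu, u_not_mem_NW G⟩

lemma Acore_NW_disjoint {x : V} (hx : x ∈ Acore G A u) : x ∉ NW G A u :=
  (Finset.mem_sdiff.1 hx).2

/-- Any walk in the filled graph ending in the component must pass through `NHD`. -/
lemma walk_hit : ∀ {a b : V} (q : (HG G A).Walk a b), a ∉ Dcomp G A u w →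
    b ∈ Dcomp G A u w → ∃ y ∈ q.support, y ∈ NHD G A u w := by
  intro a b q
  induction q with
  | nil => intro ha hb; exact absurd hb ha
  | @cons a c b h q' ih =>
      intro ha hb
      by_cases hc : c ∈ Dcomp G A u w
      · refine ⟨a, by simp, ?_⟩
        exact (mem_NHD G).2 ⟨h.2.1, ha, c, hc, h⟩
      · obtain ⟨y, hy, hy'⟩ := ih hc hb
        exact ⟨y, by simp [hy], hy'⟩

end comps


section comps2

variable {A : Finset V} {u w : V}

/-- The size bound for component neighborhoods. -/
lemma NHD_card {s : ℕ} (hsep : ¬∃ X : Set V, MinSeparator G X ∧ s < X.ncard)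
    (hu : u ∈ A) (hw : w ∈ NW G A u) : (NHD G A u w).card ≤ s := by
  have hwD : w ∈ Dcomp G A u w := mem_Dcomp_self G hw
  have hwA : w ∈ A := NW_subset G hw
  have huX : u ∉ (↑(NHD G A u w) : Set V) := by
    simpa using u_not_mem_NHD G (A := A) (w := w)
  have hwX : w ∉ (↑(NHD G A u w) : Set V) := by
    intro hc
    simp only [Finset.coe_mem, Finset.mem_coe] at hc
    exact ((mem_NHD G).1 hc).2.1 hwD
  have hsepH : Separates (HG G A) ↑(NHD G A u w) u w := by
    refine ⟨huX, hwX, fun q => ?_⟩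
    have huD : u ∉ Dcomp G A u w := fun hc => u_not_mem_NW G (Dcomp_subset G hc)
    obtain ⟨y, hy, hy'⟩ := walk_hit G q huD hwD
    exact ⟨y, hy, by simpa using hy'⟩
  have hmin : ∀ Z : Set V, Z ⊆ ↑(NHD G A u w) → Separates (HG G A) Z u w →
      Z = ↑(NHD G A u w) := by
    intro Z hZ hZsep
    by_contra hne
    obtain ⟨x₀, hx₀X, hx₀Z⟩ := Set.exists_of_ssubset (Set.ssubset_iff_subset_ne.2 ⟨hZ, hne⟩)
    have hx₀ : x₀ ∈ NHD G A u w := by simpa using hx₀X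
    obtain ⟨hx₀A, hx₀D, d₀, hd₀, hadj₀⟩ := (mem_NHD G).1 hx₀
    have hadju : (HG G A).Adj u x₀ := NHD_adj_u G hu hx₀
    have hHR : HR G A u d₀ w := HR_symm G ((mem_Dcomp G).1 hd₀).2
    obtain ⟨ww, hww⟩ := rtg_walk (HG G A) (P := fun z => z ∈ NW G A u) hHR
      (Dcomp_subset G hd₀)
    obtain ⟨y, hy, hyZ⟩ := hZsep.2.2 (.cons hadju (.cons hadj₀ ww))
    simp only [SimpleGraph.Walk.support_cons, List.mem_cons] at hy
    rcases hy with rfl | rfl | hy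
    · exact hZsep.1 hyZ
    · exact hx₀Z hyZ
    · have hyNW : y ∈ NW G A u := hww y hy
      have hyX : y ∈ NHD G A u w := by simpa using hZ hyZ
      exact NHD_not_NW G hyX hyNW
  have hsepG : Separates G ↑(NHD G A u w) u w := sep_project G hu hwA hsepH
  obtain ⟨Y, hYsub, hYsep, hYcard⟩ := sep_small G hsep hsepG
  have hYA : ∀ y ∈ (↑Y : Set V), y ∈ A := by
    intro y hy
    have := hYsub hy
    simp only [Finset.mem_coe] at this ⊢
    exact NHD_subset_A G this
  have hYsepH : Separates (HG G A) ↑Y u w := sep_lift G hYA hYsep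
  have hEq : (↑Y : Set V) = ↑(NHD G A u w) := hmin ↑Y hYsub hYsepH
  have : Y = NHD G A u w := by exact_mod_cast hEq
  rw [← this]
  exact hYcard

/-- Adjacency in the filled graph yields dead reachability outside any smaller alive set. -/
lemma HG_adj_DR {A' : Finset V} (hsub : A' ⊆ A) {y z : V} (h : (HG G A).Adj y z)
    (hy : y ∉ A') (hz : z ∉ A') : DR G A' y z := by
  obtain ⟨hne, hyA, hzA, hGadj | ⟨r, hr, h1, h2⟩⟩ := h
  · exact DR_single G hGadj hy hz
  · obtain ⟨_, z1, hz1, hrz1, hadj1⟩ := (mem_Nrg G).1 h1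
    obtain ⟨_, z2, hz2, hrz2, hadj2⟩ := (mem_Nrg G).1 h2
    have hz1' : z1 ∉ A' := fun hc => hz1 (hsub hc)
    have hz2' : z2 ∉ A' := fun hc => hz2 (hsub hc)
    have hdr : DR G A' z1 z2 := DR_mono G hsub ((DR_symm G hrz1).trans hrz2)
    exact ((DR_single G hadj1.symm hy hz1').trans hdr).trans (DR_single G hadj2 hz2' hz)

lemma HR_DR {A' : Finset V} (hsub : A' ⊆ A) (hdisj : ∀ x, x ∈ NW G A u → x ∉ A')
    {a b : V} (h : HR G A u a b) : DR G A' a b := by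
  induction h with
  | refl => exact .refl
  | tail _ hstep ih =>
      exact ih.trans (HG_adj_DR G hsub hstep.1 (hdisj _ hstep.2.1) (hdisj _ hstep.2.2))

lemma NW_not_Acore {x : V} (hx : x ∈ NW G A u) : x ∉ Acore G A u := by
  intro hc
  exact (Finset.mem_sdiff.1 hc).2 hx

lemma NW_not_AD {x : V} (hx : x ∈ NW G A u) (hxD : x ∉ Dcomp G A u w) : x ∉ AD G A u w := by
  intro hc
  rcases Finset.mem_union.1 hc with h | h
  · exact hxD h
  · exact NHD_not_NW G h hx

/-- The component neighborhood is a clique in the core child state. -/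
lemma NHD_sub_Nrg_core (hu : u ∈ A) (hw : w ∈ NW G A u) :
    NHD G A u w ⊆ Nrg G (Acore G A u) w := by
  have hsub : Acore G A u ⊆ A := Acore_subset G
  have hdisj : ∀ x, x ∈ NW G A u → x ∉ Acore G A u := fun x hx => NW_not_Acore G hx
  intro x hx
  obtain ⟨hxA, hxD, d, hd, hadj⟩ := (mem_NHD G).1 hx
  have hdNW : d ∈ NW G A u := Dcomp_subset G hd
  have hwd : DR G (Acore G A u) w d :=
    HR_DR G hsub hdisj ((mem_Dcomp G).1 hd).2
  have hxcore : x ∈ Acore G A u := NHD_subset_Acore G hu hx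
  obtain ⟨hne, _, _, hGadj | ⟨r, hr, h1, h2⟩⟩ := hadj
  · exact (mem_Nrg G).2 ⟨hxcore, d, hdisj d hdNW, hwd, hGadj.symm⟩
  · obtain ⟨_, z1, hz1, hrz1, hadj1⟩ := (mem_Nrg G).1 h1
    obtain ⟨_, z2, hz2, hrz2, hadj2⟩ := (mem_Nrg G).1 h2
    have hz1' : z1 ∉ Acore G A u := fun hc => hz1 (hsub hc)
    have hz2' : z2 ∉ Acore G A u := fun hc => hz2 (hsub hc)
    have hchain : DR G (Acore G A u) w z1 :=
      ((hwd.trans (DR_single G hadj2.symm (hdisj d hdNW) hz2')).trans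
        (DR_mono G hsub ((DR_symm G hrz2).trans hrz1)))
    exact (mem_Nrg G).2 ⟨hxcore, z1, hz1', hchain, hadj1⟩

/-- The component neighborhood is a clique in the leaf child state. -/
lemma NHD_sub_Nrg_leaf (hu : u ∈ A) (hw : w ∈ NW G A u) :
    NHD G A u w ⊆ Nrg G (AD G A u w) u := by
  have hsub : AD G A u w ⊆ A := AD_subset_A G
  have huAD : u ∉ AD G A u w := u_not_mem_AD G
  intro x hx
  have hxAD : x ∈ AD G A u w := Finset.mem_union_right _ hx
  have hadj : (HG G A).Adj u x := NHD_adj_u G hu hx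
  obtain ⟨hne, _, _, hGadj | ⟨r, hr, h1, h2⟩⟩ := hadj
  · exact (mem_Nrg G).2 ⟨hxAD, u, huAD, .refl, hGadj⟩
  · obtain ⟨_, z1, hz1, hrz1, hadj1⟩ := (mem_Nrg G).1 h1
    obtain ⟨_, z2, hz2, hrz2, hadj2⟩ := (mem_Nrg G).1 h2
    have hz1' : z1 ∉ AD G A u w := fun hc => hz1 (hsub hc)
    have hz2' : z2 ∉ AD G A u w := fun hc => hz2 (hsub hc)
    have hchain : DR G (AD G A u w) u z2 :=
      (DR_single G hadj1.symm huAD hz1').trans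
        (DR_mono G hsub ((DR_symm G hrz1).trans hrz2))
    exact (mem_Nrg G).2 ⟨hxAD, z2, hz2', hchain, hadj2⟩

/-- Escape lemma: a dead walk in a child state either reaches a formerly-alive vertex or
stays in the old dead region. -/
lemma DR_restrict {A' : Finset V} (hsub : A' ⊆ A) {r : V} (hr : r ∉ A) :
    ∀ {z : V}, DR G A' r z →
      (∃ a, a ∈ A ∧ a ∉ A' ∧ DR G A' r a) ∨ (z ∉ A ∧ DR G A r z) := by
  intro z h
  induction h with
  | refl => exact Or.inr ⟨hr, .refl⟩
  | @tail y z h1 hstep ih =>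
      rcases ih with h | ⟨hyA, hdr⟩
      · exact Or.inl h
      · by_cases hzA : z ∈ A
        · exact Or.inl ⟨z, hzA, hstep.2.2, h1.tail hstep⟩
        · exact Or.inr ⟨hzA, hdr.tail ⟨hstep.1, hyA, hzA⟩⟩

end comps2


section comps3

variable {A : Finset V} {u w : V}

lemma not_mem_Acore {z : V} (hz : z ∉ Acore G A u) : z ∉ A ∨ z ∈ NW G A u := by
  by_cases hzA : z ∈ A
  · right
    by_contra hc
    exact hz (Finset.mem_sdiff.2 ⟨hzA, hc⟩)
  · exact Or.inl hzA

/-- Structure of dead walks in the core child state starting from a component vertex. -/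
lemma core_reach (hw : w ∈ NW G A u) :
    ∀ {z : V}, DR G (Acore G A u) w z →
      (z ∈ NW G A u → HR G A u w z) ∧
      (z ∉ A → ∃ w₂, w₂ ∈ NW G A u ∧ HR G A u w w₂ ∧ w₂ ∈ Nrg G A z) := by
  intro z h
  induction h with
  | refl =>
      exact ⟨fun _ => .refl, fun hc => absurd (NW_subset G hw) hc⟩
  | @tail y z h1 hstep ih =>
      obtain ⟨ih1, ih2⟩ := ih
      have hyc := hstep.2.1
      have hzc := hstep.2.2
      constructor
      · intro hzNW
        rcases not_mem_Acore G hyc with hyA | hyNW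
        · -- y dead, z ∈ NW : fill step
          obtain ⟨w₂, hw₂NW, hHR, hw₂N⟩ := ih2 hyA
          have hzN : z ∈ Nrg G A y :=
            (mem_Nrg G).2 ⟨NW_subset G hzNW, y, hyA, .refl, hstep.1⟩
          by_cases hw₂z : w₂ = z
          · subst hw₂z; exact hHR
          · have hadj : (HG G A).Adj w₂ z :=
              ⟨hw₂z, NW_subset G hw₂NW, NW_subset G hzNW, Or.inr ⟨y, hyA, hw₂N, hzN⟩⟩
            exact hHR.tail ⟨hadj, hw₂NW, hzNW⟩
        · -- y ∈ NW, z ∈ NW : H-edge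
          have hadj : (HG G A).Adj y z :=
            HG_adj_of_G G hstep.1 (NW_subset G hyNW) (NW_subset G hzNW)
          exact (ih1 hyNW).tail ⟨hadj, hyNW, hzNW⟩
      · intro hzA
        rcases not_mem_Acore G hyc with hyA | hyNW
        · obtain ⟨w₂, hw₂NW, hHR, hw₂N⟩ := ih2 hyA
          have hdr : DR G A y z := DR_single G hstep.1 hyA hzA
          refine ⟨w₂, hw₂NW, hHR, ?_⟩
          rw [← Nrg_congr G hdr]
          exact hw₂N
        · refine ⟨y, hyNW, ih1 hyNW, ?_⟩
          exact (mem_Nrg G).2 ⟨NW_subset G hyNW, z, hzA, .refl, hstep.1.symm⟩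

/-- The core child state is good. -/
lemma good_core {s : ℕ} (hsep : ¬∃ X : Set V, MinSeparator G X ∧ s < X.ncard)
    (hu : u ∈ A) (hGood : Good G s A) : Good G s (Acore G A u) := by
  intro r hr
  by_cases hex : ∃ a, a ∈ A ∧ a ∉ Acore G A u ∧ DR G (Acore G A u) r a
  · obtain ⟨a, haA, haC, hra⟩ := hex
    have haNW : a ∈ NW G A u := by
      rcases not_mem_Acore G haC with h | h
      · exact absurd haA h
      · exact h
    have hsub : Nrg G (Acore G A u) r ⊆ NHD G A u a := by
      intro x hx
      obtain ⟨hxc, z, hz, hrz, hadj⟩ := (mem_Nrg G).1 hx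
      have haz : DR G (Acore G A u) a z := (DR_symm G hra).trans hrz
      have hxA : x ∈ A := Acore_subset G hxc
      rcases not_mem_Acore G hz with hzA | hzNW
      · obtain ⟨w₂, hw₂NW, hHR, hw₂N⟩ := (core_reach G haNW haz).2 hzA
        have hxN : x ∈ Nrg G A z := (mem_Nrg G).2 ⟨hxA, z, hzA, .refl, hadj⟩
        have hxw₂ : x ≠ w₂ := by
          rintro rfl
          exact Acore_NW_disjoint G hxc hw₂NW
        have hadj2 : (HG G A).Adj x w₂ :=
          ⟨hxw₂, hxA, NW_subset G hw₂NW, Or.inr ⟨z, hzA, hxN, hw₂N⟩⟩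
        refine (mem_NHD G).2 ⟨hxA, ?_, w₂, ?_, hadj2⟩
        · intro hc
          exact Acore_NW_disjoint G hxc (Dcomp_subset G hc)
        · exact (mem_Dcomp G).2 ⟨hw₂NW, hHR⟩
      · have hHR : HR G A u a z := (core_reach G haNW haz).1 hzNW
        have hadj2 : (HG G A).Adj x z :=
          HG_adj_of_G G hadj.symm hxA (NW_subset G hzNW)
        refine (mem_NHD G).2 ⟨hxA, ?_, z, ?_, hadj2⟩
        · intro hc
          exact Acore_NW_disjoint G hxc (Dcomp_subset G hc)
        · exact (mem_Dcomp G).2 ⟨hzNW, hHR⟩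
    exact (Finset.card_le_card hsub).trans (NHD_card G hsep hu haNW)
  · have hrA : r ∉ A := by
      by_contra hrA
      exact hex ⟨r, hrA, hr, .refl⟩
    have hsub : Nrg G (Acore G A u) r ⊆ Nrg G A r := by
      intro x hx
      obtain ⟨hxc, z, hz, hrz, hadj⟩ := (mem_Nrg G).1 hx
      rcases DR_restrict G (Acore_subset G) hrA hrz with h | ⟨hzA, hdr⟩
      · exact absurd h hex
      · exact (mem_Nrg G).2 ⟨Acore_subset G hxc, z, hzA, hdr, hadj⟩
    exact (Finset.card_le_card hsub).trans (hGood r hrA)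

lemma mem_NHD_of_adj_outside {x y : V} (hx : x ∈ AD G A u w) (hy : y ∈ A)
    (hyD : y ∉ AD G A u w) (h : (HG G A).Adj x y) : x ∈ NHD G A u w := by
  rcases Finset.mem_union.1 hx with hxD | hxN
  · exfalso
    by_cases hyNW : y ∈ NW G A u
    · exact hyD (Finset.mem_union_left _ (Dcomp_closed G hxD h hyNW))
    · refine hyD (Finset.mem_union_right _ ((mem_NHD G).2 ⟨hy, ?_, x, hxD, h.symm⟩))
      intro hc
      exact hyNW (Dcomp_subset G hc)
  · exact hxN

/-- Structure of dead walks in a leaf child state from a formerly-alive vertex. -/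
lemma leaf_reach {a : V} (ha : a ∈ A) :
    ∀ {z : V}, DR G (AD G A u w) a z →
      z ∉ A → ∃ a₂, a₂ ∈ A ∧ a₂ ∉ AD G A u w ∧ a₂ ∈ Nrg G A z := by
  intro z h
  induction h with
  | refl => intro hc; exact absurd ha hc
  | @tail y z h1 hstep ih =>
      intro hzA
      by_cases hyA : y ∈ A
      · refine ⟨y, hyA, hstep.2.1, ?_⟩
        exact (mem_Nrg G).2 ⟨hyA, z, hzA, .refl, hstep.1.symm⟩
      · obtain ⟨a₂, ha₂A, ha₂D, ha₂N⟩ := ih hyA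
        have hdr : DR G A y z := DR_single G hstep.1 hyA hzA
        refine ⟨a₂, ha₂A, ha₂D, ?_⟩
        rw [← Nrg_congr G hdr]
        exact ha₂N

/-- Leaf child states are good. -/
lemma good_leaf {s : ℕ} (hsep : ¬∃ X : Set V, MinSeparator G X ∧ s < X.ncard)
    (hu : u ∈ A) (hw : w ∈ NW G A u) (hGood : Good G s A) : Good G s (AD G A u w) := by
  intro r hr
  by_cases hex : ∃ a, a ∈ A ∧ a ∉ AD G A u w ∧ DR G (AD G A u w) r a
  · obtain ⟨a, haA, haD, hra⟩ := hex
    have hsub : Nrg G (AD G A u w) r ⊆ NHD G A u w := by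
      intro x hx
      obtain ⟨hxAD, z, hz, hrz, hadj⟩ := (mem_Nrg G).1 hx
      have haz : DR G (AD G A u w) a z := (DR_symm G hra).trans hrz
      have hxA : x ∈ A := AD_subset_A G hxAD
      by_cases hzA : z ∈ A
      · have hadj2 : (HG G A).Adj x z := HG_adj_of_G G hadj.symm hxA hzA
        exact mem_NHD_of_adj_outside G hxAD hzA hz hadj2
      · obtain ⟨a₂, ha₂A, ha₂D, ha₂N⟩ := leaf_reach G haA haz hzA
        have hxN : x ∈ Nrg G A z := (mem_Nrg G).2 ⟨hxA, z, hzA, .refl, hadj⟩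
        have hxa₂ : x ≠ a₂ := by rintro rfl; exact ha₂D hxAD
        have hadj2 : (HG G A).Adj x a₂ :=
          ⟨hxa₂, hxA, ha₂A, Or.inr ⟨z, hzA, hxN, ha₂N⟩⟩
        exact mem_NHD_of_adj_outside G hxAD ha₂A ha₂D hadj2
    exact (Finset.card_le_card hsub).trans (NHD_card G hsep hu hw)
  · have hrA : r ∉ A := by
      by_contra hrA
      exact hex ⟨r, hrA, hr, .refl⟩
    have hsub : Nrg G (AD G A u w) r ⊆ Nrg G A r := by
      intro x hx
      obtain ⟨hxc, z, hz, hrz, hadj⟩ := (mem_Nrg G).1 hx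
      rcases DR_restrict G (AD_subset_A G) hrA hrz with h | ⟨hzA, hdr⟩
      · exact absurd h hex
      · exact (mem_Nrg G).2 ⟨AD_subset_A G hxc, z, hzA, hdr, hadj⟩
    exact (Finset.card_le_card hsub).trans (hGood r hrA)

/-- Distribution of cliques of the filled graph over the children. -/
lemma clique_distrib {K : Finset V} (hKA : K ⊆ A) (hK : (HG G A).IsClique ↑K) :
    K ⊆ Acore G A u ∨ ∃ w', w' ∈ NW G A u ∧ K ⊆ AD G A u w' := by
  by_cases hKW : ∃ d ∈ K, d ∈ NW G A u
  · obtain ⟨d, hdK, hdNW⟩ := hKW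
    right
    refine ⟨d, hdNW, fun x hxK => ?_⟩
    by_cases hxd : x = d
    · subst hxd
      exact Finset.mem_union_left _ (mem_Dcomp_self G hdNW)
    · have hadj : (HG G A).Adj x d :=
        hK (by exact_mod_cast hxK) (by exact_mod_cast hdK) hxd
      by_cases hxNW : x ∈ NW G A u
      · exact Finset.mem_union_left _ (Dcomp_closed G (mem_Dcomp_self G hdNW) hadj.symm hxNW)
      · refine Finset.mem_union_right _ ((mem_NHD G).2 ⟨hKA hxK, ?_, d, mem_Dcomp_self G hdNW, hadj⟩)
        intro hc
        exact hxNW (Dcomp_subset G hc)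
  · left
    intro x hxK
    push_neg at hKW
    exact Finset.mem_sdiff.2 ⟨hKA hxK, hKW x hxK⟩

/-- Shared vertices between a leaf child and anything disjoint from its component
lie in the component neighborhood. -/
lemma shared_core_AD {v : V} (hv : v ∈ Acore G A u) (hv' : v ∈ AD G A u w) :
    v ∈ NHD G A u w := by
  rcases Finset.mem_union.1 hv' with h | h
  · exact absurd (Dcomp_subset G h) (Acore_NW_disjoint G hv)
  · exact h

lemma shared_AD_AD {w' v : V} (hne : Dcomp G A u w ≠ Dcomp G A u w')
    (hv : v ∈ AD G A u w) (hv' : v ∈ AD G A u w') : v ∈ NHD G A u w := by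
  rcases Finset.mem_union.1 hv with h | h
  · exfalso
    rcases Finset.mem_union.1 hv' with h' | h'
    · exact Dcomp_disjoint G hne v h h'
    · obtain ⟨_, hvD', d', hd', hadj'⟩ := (mem_NHD G).1 h'
      have : v ∈ Dcomp G A u w' := Dcomp_closed G hd' hadj'.symm (Dcomp_subset G h)
      exact Dcomp_disjoint G hne v h this
  · exact h

lemma Acore_card_lt {y : V} (hy : y ∈ NW G A u) : (Acore G A u).card < A.card :=
  Finset.card_lt_card ⟨Acore_subset G, fun hc =>
    Acore_NW_disjoint G (hc (NW_subset G hy)) hy⟩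

lemma AD_card_lt (hu : u ∈ A) : (AD G A u w).card < A.card :=
  Finset.card_lt_card ⟨AD_subset_A G, fun hc => u_not_mem_AD G (hc hu)⟩

end comps3


/-! ### Gluing two tree decompositions along a shared clique -/

section Glue

variable {ι₁ ι₂ : Type} (T₁ : SimpleGraph ι₁) (T₂ : SimpleGraph ι₂) (i₁ : ι₁) (i₂ : ι₂)

def glueG : SimpleGraph (ι₁ ⊕ ι₂) where
  Adj x y := match x, y with
    | .inl a, .inl b => T₁.Adj a b
    | .inr a, .inr b => T₂.Adj a b
    | .inl a, .inr b => a = i₁ ∧ b = i₂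
    | .inr a, .inl b => a = i₂ ∧ b = i₁
  symm := by
    constructor
    rintro (a | a) (b | b) h
    · exact h.symm
    · exact ⟨h.2, h.1⟩
    · exact ⟨h.2, h.1⟩
    · exact h.symm
  loopless := by
    constructor
    rintro (a | a) h
    · exact T₁.irrefl h
    · exact T₂.irrefl h

def inlHom : T₁ →g glueG T₁ T₂ i₁ i₂ := ⟨Sum.inl, fun h => h⟩

def inrHom : T₂ →g glueG T₁ T₂ i₁ i₂ := ⟨Sum.inr, fun h => h⟩

lemma inl_injective : Function.Injective (inlHom T₁ T₂ i₁ i₂ : ι₁ → ι₁ ⊕ ι₂) :=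
  Sum.inl_injective

lemma inr_injective : Function.Injective (inrHom T₁ T₂ i₁ i₂ : ι₂ → ι₁ ⊕ ι₂) :=
  Sum.inr_injective

lemma glue_adj_bridge : (glueG T₁ T₂ i₁ i₂).Adj (Sum.inl i₁) (Sum.inr i₂) := ⟨rfl, rfl⟩

variable {T₁ T₂ i₁ i₂}

lemma glue_cross : ∀ {x y : ι₁ ⊕ ι₂} (p : (glueG T₁ T₂ i₁ i₂).Walk x y),
    x.isLeft ≠ y.isLeft → s(Sum.inl i₁, Sum.inr i₂) ∈ p.edges := by
  intro x y p
  induction p with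
  | nil => intro h; exact absurd rfl h
  | @cons x c y h q ih =>
      intro hxy
      by_cases hc : x.isLeft = c.isLeft
      · have : s(Sum.inl i₁, Sum.inr i₂) ∈ q.edges := ih (fun hcy => hxy (hc.trans hcy))
        rw [SimpleGraph.Walk.edges_cons]
        exact List.mem_cons_of_mem _ this
      · have hedge : s(x, c) = s(Sum.inl i₁, Sum.inr i₂) := by
          cases x with
          | inl a =>
              cases c with
              | inl b => simp at hc
              | inr b =>
                  obtain ⟨rfl, rfl⟩ := h
                  rfl
          | inr a =>
              cases c with
              | inl b =>
                  obtain ⟨rfl, rfl⟩ := h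
                  exact Sym2.eq_swap
              | inr b => simp at hc
        rw [SimpleGraph.Walk.edges_cons, ← hedge]
        exact List.mem_cons_self

lemma glue_stay {x y : ι₁ ⊕ ι₂} (p : (glueG T₁ T₂ i₁ i₂).Walk x y) (hp : p.IsPath)
    (hxy : x.isLeft = y.isLeft) : ∀ w ∈ p.support, w.isLeft = x.isLeft := by
  intro w hw
  by_contra hwx
  have h1 : s(Sum.inl i₁, Sum.inr i₂) ∈ (p.takeUntil w hw).edges :=
    glue_cross _ (fun hc => hwx hc.symm)
  have h2 : s(Sum.inl i₁, Sum.inr i₂) ∈ (p.dropUntil w hw).edges :=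
    glue_cross _ (fun hc => hwx (hc.trans hxy.symm))
  have hnd := hp.isTrail.edges_nodup
  rw [← SimpleGraph.Walk.take_spec p hw, SimpleGraph.Walk.edges_append] at hnd
  exact (List.nodup_append.1 hnd).2.2 _ h1 _ h2 rfl

lemma glue_pull₁ : ∀ {x y : ι₁ ⊕ ι₂} (p : (glueG T₁ T₂ i₁ i₂).Walk x y)
    (_ : ∀ w ∈ p.support, w.isLeft = true) {a b : ι₁}
    (hx : x = Sum.inl a) (hy : y = Sum.inl b),
    ∃ q : T₁.Walk a b, q.map (inlHom T₁ T₂ i₁ i₂) = p.copy hx hy := by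
  intro x y p
  induction p with
  | nil =>
      intro _ a b hx hy
      subst hx
      obtain rfl : a = b := Sum.inl.inj hy
      exact ⟨.nil, by simp [SimpleGraph.Walk.copy_rfl_rfl]; rfl⟩
  | @cons x c y h q ih =>
      intro hall a b hx hy
      subst hx
      have hcL : c.isLeft = true := hall c (by simp)
      obtain ⟨c', rfl⟩ : ∃ c', c = Sum.inl c' := by
        cases c with
        | inl c' => exact ⟨c', rfl⟩
        | inr c' => simp at hcL
      obtain ⟨q', hq'⟩ := ih (fun w hw => hall w (by simp [hw])) rfl hy
      refine ⟨.cons h q', ?_⟩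
      subst hy; rw [SimpleGraph.Walk.copy_rfl_rfl] at hq'; subst hq'; rfl

lemma glue_pull₂ : ∀ {x y : ι₁ ⊕ ι₂} (p : (glueG T₁ T₂ i₁ i₂).Walk x y)
    (_ : ∀ w ∈ p.support, w.isLeft = false) {a b : ι₂}
    (hx : x = Sum.inr a) (hy : y = Sum.inr b),
    ∃ q : T₂.Walk a b, q.map (inrHom T₁ T₂ i₁ i₂) = p.copy hx hy := by
  intro x y p
  induction p with
  | nil =>
      intro _ a b hx hy
      subst hx
      obtain rfl : a = b := Sum.inr.inj hy
      exact ⟨.nil, by simp [SimpleGraph.Walk.copy_rfl_rfl]; rfl⟩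
  | @cons x c y h q ih =>
      intro hall a b hx hy
      subst hx
      have hcL : c.isLeft = false := hall c (by simp)
      obtain ⟨c', rfl⟩ : ∃ c', c = Sum.inr c' := by
        cases c with
        | inl c' => simp at hcL
        | inr c' => exact ⟨c', rfl⟩
      obtain ⟨q', hq'⟩ := ih (fun w hw => hall w (by simp [hw])) rfl hy
      refine ⟨.cons h q', ?_⟩
      subst hy; rw [SimpleGraph.Walk.copy_rfl_rfl] at hq'; subst hq'; rfl

lemma glue_isTree (h₁ : T₁.IsTree) (h₂ : T₂.IsTree) : (glueG T₁ T₂ i₁ i₂).IsTree := by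
  rw [SimpleGraph.isTree_iff]
  constructor
  · -- connected
    have hne : Nonempty (ι₁ ⊕ ι₂) := ⟨Sum.inl i₁⟩
    refine ⟨fun x y => ?_⟩
    have hreach : ∀ z : ι₁ ⊕ ι₂, (glueG T₁ T₂ i₁ i₂).Reachable z (Sum.inl i₁) := by
      intro z
      cases z with
      | inl a =>
          exact SimpleGraph.Reachable.map (inlHom T₁ T₂ i₁ i₂)
            (h₁.isConnected.preconnected a i₁)
      | inr a =>
          refine SimpleGraph.Reachable.trans ?_
            (SimpleGraph.Adj.reachable (glue_adj_bridge T₁ T₂ i₁ i₂).symm)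
          exact SimpleGraph.Reachable.map (inrHom T₁ T₂ i₁ i₂)
            (h₂.isConnected.preconnected a i₂)
    exact (hreach x).trans (hreach y).symm
  · -- acyclic
    intro v c hc
    rcases Classical.em (∀ w ∈ c.support, w.isLeft = v.isLeft) with hall | hall
    · cases v with
      | inl a =>
          obtain ⟨q, hq⟩ := glue_pull₁ c (by simpa using hall) rfl rfl
          rw [SimpleGraph.Walk.copy_rfl_rfl] at hq
          have : q.IsCycle := by
            rw [← SimpleGraph.Walk.map_isCycle_iff_of_injective
              (inl_injective T₁ T₂ i₁ i₂), hq]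
            exact hc
          exact h₁.IsAcyclic q this
      | inr a =>
          obtain ⟨q, hq⟩ := glue_pull₂ c (by simpa using hall) rfl rfl
          rw [SimpleGraph.Walk.copy_rfl_rfl] at hq
          have : q.IsCycle := by
            rw [← SimpleGraph.Walk.map_isCycle_iff_of_injective
              (inr_injective T₁ T₂ i₁ i₂), hq]
            exact hc
          exact h₂.IsAcyclic q this
    · push_neg at hall
      obtain ⟨w, hw, hwv⟩ := hall
      have h1 : s(Sum.inl i₁, Sum.inr i₂) ∈ (c.takeUntil w hw).edges :=
        glue_cross _ (fun hcc => hwv hcc.symm)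
      have h2 : s(Sum.inl i₁, Sum.inr i₂) ∈ (c.dropUntil w hw).edges :=
        glue_cross _ (fun hcc => hwv hcc)
      have hnd := hc.isTrail.edges_nodup
      rw [← SimpleGraph.Walk.take_spec c hw, SimpleGraph.Walk.edges_append] at hnd
      exact (List.nodup_append.1 hnd).2.2 _ h1 _ h2 rfl

end Glue


/-! ### Bundled partial tree decompositions and gluing them -/

structure PTD {ι : Type} (T : SimpleGraph ι) (B : ι → Finset V) (X : Finset V) : Prop where
  tree : T.IsTree
  bags_sub : ∀ i, B i ⊆ X
  cover : ∀ v ∈ X, ∃ i, v ∈ B i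
  coh : ∀ (v : V) (i j : ι), v ∈ B i → v ∈ B j →
    ∀ p : T.Walk i j, p.IsPath → ∀ x ∈ p.support, v ∈ B x

section gluePTD

variable {ι₁ ι₂ : Type} {T₁ : SimpleGraph ι₁} {T₂ : SimpleGraph ι₂}
  {B₁ : ι₁ → Finset V} {B₂ : ι₂ → Finset V} {X₁ X₂ : Finset V} {i₁ : ι₁} {i₂ : ι₂}

lemma glue_PTD (h₁ : PTD T₁ B₁ X₁) (h₂ : PTD T₂ B₂ X₂) (S : Finset V)
    (hS₁ : S ⊆ B₁ i₁) (hS₂ : S ⊆ B₂ i₂)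
    (hshared : ∀ v, v ∈ X₁ → v ∈ X₂ → v ∈ S) :
    PTD (glueG T₁ T₂ i₁ i₂) (Sum.elim B₁ B₂) (X₁ ∪ X₂) := by
  have htree := glue_isTree h₁.tree h₂.tree (i₁ := i₁) (i₂ := i₂)
  refine ⟨htree, ?_, ?_, ?_⟩
  · rintro (a | a)
    · exact (h₁.bags_sub a).trans Finset.subset_union_left
    · exact (h₂.bags_sub a).trans Finset.subset_union_right
  · intro v hv
    rcases Finset.mem_union.1 hv with h | h
    · obtain ⟨i, hi⟩ := h₁.cover v h
      exact ⟨Sum.inl i, hi⟩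
    · obtain ⟨i, hi⟩ := h₂.cover v h
      exact ⟨Sum.inr i, hi⟩
  · intro v i j hvi hvj p hp x hx
    cases i with
    | inl a =>
        cases j with
        | inl b =>
            have hall : ∀ w ∈ p.support, w.isLeft = true :=
              fun w hw => glue_stay p hp rfl w hw
            obtain ⟨q, hq⟩ := glue_pull₁ p hall rfl rfl
            rw [SimpleGraph.Walk.copy_rfl_rfl] at hq
            have hqpath : q.IsPath := by
              have := hp
              rw [← hq] at this
              exact SimpleGraph.Walk.IsPath.of_map this
            erw [← hq, SimpleGraph.Walk.support_map] at hx
            obtain ⟨x', hx', rfl⟩ := List.mem_map.1 hx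
            exact h₁.coh v a b hvi hvj q hqpath x' hx'
        | inr b =>
            -- mixed case
            have hvS : v ∈ S := hshared v (h₁.bags_sub a hvi) (h₂.bags_sub b hvj)
            obtain ⟨q₁, hq₁, _⟩ := h₁.tree.existsUnique_path a i₁
            obtain ⟨q₂, hq₂, _⟩ := h₂.tree.existsUnique_path i₂ b
            set q₁m := q₁.map (inlHom T₁ T₂ i₁ i₂) with hq₁m
            set q₂m := q₂.map (inrHom T₁ T₂ i₁ i₂) with hq₂m
            have hq₁mp : q₁m.IsPath :=
              SimpleGraph.Walk.map_isPath_of_injective (inl_injective T₁ T₂ i₁ i₂) hq₁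
            have hq₂mp : q₂m.IsPath :=
              SimpleGraph.Walk.map_isPath_of_injective (inr_injective T₁ T₂ i₁ i₂) hq₂
            set wpath : (glueG T₁ T₂ i₁ i₂).Walk (Sum.inl a) (Sum.inr b) :=
              q₁m.append (SimpleGraph.Walk.cons (glue_adj_bridge T₁ T₂ i₁ i₂) q₂m) with hwp
            have hsupp : wpath.support = q₁m.support ++ q₂m.support := by
              erw [hwp, SimpleGraph.Walk.support_append, SimpleGraph.Walk.support_cons]
              rfl
            have hwpath : wpath.IsPath := by
              rw [SimpleGraph.Walk.isPath_def, hsupp]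
              refine List.nodup_append.2 ⟨hq₁mp.support_nodup, hq₂mp.support_nodup, ?_⟩
              intro z hz1 z' hz2 hzz'
              rw [hq₁m, SimpleGraph.Walk.support_map] at hz1
              rw [hq₂m, SimpleGraph.Walk.support_map] at hz2
              obtain ⟨z1, _, rfl⟩ := List.mem_map.1 hz1
              obtain ⟨z2, _, rfl⟩ := List.mem_map.1 hz2
              simp [inlHom, inrHom] at hzz'
            obtain ⟨pp, _, hppuniq⟩ := htree.existsUnique_path (Sum.inl a) (Sum.inr b)
            have hpeq : p = wpath := (hppuniq p hp).trans (hppuniq wpath hwpath).symm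
            rw [hpeq, hsupp] at hx
            rcases List.mem_append.1 hx with hx | hx
            · rw [hq₁m, SimpleGraph.Walk.support_map] at hx
              obtain ⟨x', hx', rfl⟩ := List.mem_map.1 hx
              exact h₁.coh v a i₁ hvi (hS₁ hvS) q₁ hq₁ x' hx'
            · rw [hq₂m, SimpleGraph.Walk.support_map] at hx
              obtain ⟨x', hx', rfl⟩ := List.mem_map.1 hx
              exact h₂.coh v i₂ b (hS₂ hvS) hvj q₂ hq₂ x' hx'
    | inr a =>
        cases j with
        | inr b =>
            have hall : ∀ w ∈ p.support, w.isLeft = false :=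
              fun w hw => glue_stay p hp rfl w hw
            obtain ⟨q, hq⟩ := glue_pull₂ p hall rfl rfl
            rw [SimpleGraph.Walk.copy_rfl_rfl] at hq
            have hqpath : q.IsPath := by
              have := hp
              rw [← hq] at this
              exact SimpleGraph.Walk.IsPath.of_map this
            erw [← hq, SimpleGraph.Walk.support_map] at hx
            obtain ⟨x', hx', rfl⟩ := List.mem_map.1 hx
            exact h₂.coh v a b hvi hvj q hqpath x' hx'
        | inl b =>
            have hvS : v ∈ S := hshared v (h₁.bags_sub b hvj) (h₂.bags_sub a hvi)
            obtain ⟨q₂, hq₂, _⟩ := h₂.tree.existsUnique_path a i₂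
            obtain ⟨q₁, hq₁, _⟩ := h₁.tree.existsUnique_path i₁ b
            set q₁m := q₁.map (inlHom T₁ T₂ i₁ i₂) with hq₁m
            set q₂m := q₂.map (inrHom T₁ T₂ i₁ i₂) with hq₂m
            have hq₁mp : q₁m.IsPath :=
              SimpleGraph.Walk.map_isPath_of_injective (inl_injective T₁ T₂ i₁ i₂) hq₁
            have hq₂mp : q₂m.IsPath :=
              SimpleGraph.Walk.map_isPath_of_injective (inr_injective T₁ T₂ i₁ i₂) hq₂
            set wpath : (glueG T₁ T₂ i₁ i₂).Walk (Sum.inr a) (Sum.inl b) :=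
              q₂m.append (SimpleGraph.Walk.cons (glue_adj_bridge T₁ T₂ i₁ i₂).symm q₁m)
              with hwp
            have hsupp : wpath.support = q₂m.support ++ q₁m.support := by
              erw [hwp, SimpleGraph.Walk.support_append, SimpleGraph.Walk.support_cons]
              rfl
            have hwpath : wpath.IsPath := by
              rw [SimpleGraph.Walk.isPath_def, hsupp]
              refine List.nodup_append.2 ⟨hq₂mp.support_nodup, hq₁mp.support_nodup, ?_⟩
              intro z hz1 z' hz2 hzz'
              rw [hq₂m, SimpleGraph.Walk.support_map] at hz1
              rw [hq₁m, SimpleGraph.Walk.support_map] at hz2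
              obtain ⟨z1, _, rfl⟩ := List.mem_map.1 hz1
              obtain ⟨z2, _, rfl⟩ := List.mem_map.1 hz2
              simp [inlHom, inrHom] at hzz'
            obtain ⟨pp, _, hppuniq⟩ := htree.existsUnique_path (Sum.inr a) (Sum.inl b)
            have hpeq : p = wpath := (hppuniq p hp).trans (hppuniq wpath hwpath).symm
            rw [hpeq, hsupp] at hx
            rcases List.mem_append.1 hx with hx | hx
            · rw [hq₂m, SimpleGraph.Walk.support_map] at hx
              obtain ⟨x', hx', rfl⟩ := List.mem_map.1 hx
              exact h₂.coh v a i₂ hvi (hS₂ hvS) q₂ hq₂ x' hx'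
            · rw [hq₁m, SimpleGraph.Walk.support_map] at hx
              obtain ⟨x', hx', rfl⟩ := List.mem_map.1 hx
              exact h₁.coh v i₁ b (hS₁ hvS) hvj q₁ hq₁ x' hx'

end gluePTD


/-! ### The main recursion -/

/-- Neighborhood closure of a component set. -/
noncomputable def ADC (A : Finset V) (C : Finset V) : Finset V :=
  C ∪ A.filter (fun x => x ∉ C ∧ ∃ d ∈ C, (HG G A).Adj x d)

lemma ADC_Dcomp {A : Finset V} {u w : V} : ADC G A (Dcomp G A u w) = AD G A u w := rfl

lemma punit_tree : (⊥ : SimpleGraph PUnit).IsTree := by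
  constructor
  · rw [SimpleGraph.connected_iff]
    refine ⟨fun x y => ?_, ⟨PUnit.unit⟩⟩
    rw [Subsingleton.elim x y]
  · exact SimpleGraph.isAcyclic_bot

theorem main {k s : ℕ} (hk : 2 ≤ k) (hs : 1 ≤ s) (hclique : G.CliqueFree k)
    (hsep : ¬∃ X : Set V, MinSeparator G X ∧ s < X.ncard) :
    ∀ (n : ℕ) (A : Finset V), A.card ≤ n → Good G s A →
    ∃ (ι : Type) (_ : Fintype ι) (_ : Nonempty ι) (T : SimpleGraph ι) (B : ι → Finset V),
      PTD T B A ∧ (∀ i, (B i).card ≤ (k - 1) * s ^ 3) ∧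
      (∀ K : Finset V, K ⊆ A → (HG G A).IsClique ↑K → ∃ i, K ⊆ B i) := by
  intro n
  induction n with
  | zero =>
      intro A hcard _
      have hA : A = ∅ := Finset.card_eq_zero.1 (Nat.le_zero.1 hcard)
      subst hA
      refine ⟨PUnit, inferInstance, ⟨PUnit.unit⟩, ⊥, fun _ => ∅, ?_, ?_, ?_⟩
      · exact ⟨punit_tree, fun _ => le_refl _, fun v hv => absurd hv (by simp),
          fun v i j hvi => by simp at hvi⟩
      · intro i; simp
      · intro K hK _
        exact ⟨PUnit.unit, by simpa using hK⟩
  | succ n ih =>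
      intro A hcard hGood
      by_cases hcomp : ∀ x ∈ A, ∀ y ∈ A, x ≠ y → (HG G A).Adj x y
      · -- complete case: one bag
        refine ⟨PUnit, inferInstance, ⟨PUnit.unit⟩, ⊥, fun _ => A, ?_, ?_, ?_⟩
        · refine ⟨punit_tree, fun _ => le_refl _, fun v hv => ⟨PUnit.unit, hv⟩, ?_⟩
          intro v i j hvi _ p _ x _
          exact hvi
        · intro _
          refine clique_small G hk hs hclique hsep hGood ?_
          intro x hx y hy hne
          exact hcomp x (by exact_mod_cast hx) y (by exact_mod_cast hy) hne
        · intro K hK _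
          exact ⟨PUnit.unit, hK⟩
      · push_neg at hcomp
        obtain ⟨u, huA, y, hyA, hneuy, hnadj⟩ := hcomp
        have hyW : y ∈ NW G A u := (mem_NW G).2 ⟨hyA, Ne.symm hneuy, hnadj⟩
        -- core decomposition
        have hcoreGood : Good G s (Acore G A u) := good_core G hsep huA hGood
        have hcoreCard : (Acore G A u).card ≤ n := by
          have := Acore_card_lt G (A := A) (u := u) hyW
          omega
        obtain ⟨ι₀, instF₀, instN₀, T₀, B₀, hPTD₀, hsize₀, hclq₀⟩ :=
          ih (Acore G A u) hcoreCard hcoreGood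
        -- assemble over a set of components
        have hassemble : ∀ reps : Finset (Finset V),
            reps ⊆ (NW G A u).image (fun w => Dcomp G A u w) →
            ∃ (ι : Type) (_ : Fintype ι) (_ : Nonempty ι) (T : SimpleGraph ι)
              (B : ι → Finset V),
              PTD T B (Acore G A u ∪ reps.biUnion (fun C => ADC G A C)) ∧
              (∀ i, (B i).card ≤ (k - 1) * s ^ 3) ∧
              (∀ K : Finset V, K ⊆ Acore G A u →
                (HG G (Acore G A u)).IsClique ↑K → ∃ i, K ⊆ B i) ∧
              (∀ C ∈ reps, ∀ K : Finset V, K ⊆ ADC G A C →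
                (HG G (ADC G A C)).IsClique ↑K → ∃ i, K ⊆ B i) := by
          intro reps
          induction reps using Finset.induction_on with
          | empty =>
              intro _
              refine ⟨ι₀, instF₀, instN₀, T₀, B₀, ?_, hsize₀, hclq₀, by simp⟩
              simpa using hPTD₀
          | @insert C reps hC ihreps =>
              intro hsub
              have hCim : C ∈ (NW G A u).image (fun w => Dcomp G A u w) :=
                hsub (Finset.mem_insert_self _ _)
              obtain ⟨w', hw'NW, hw'C⟩ := Finset.mem_image.1 hCim
              have hrepsub : reps ⊆ (NW G A u).image (fun w => Dcomp G A u w) :=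
                fun x hx => hsub (Finset.mem_insert_of_mem hx)
              obtain ⟨ιa, instFa, instNa, Ta, Ba, hPTDa, hsizea, hclqCa, hclqLa⟩ :=
                ihreps hrepsub
              -- leaf decomposition for the component C
              have hleafGood : Good G s (AD G A u w') := good_leaf G hsep huA hw'NW hGood
              have hleafCard : (AD G A u w').card ≤ n := by
                have := AD_card_lt G (A := A) (w := w') huA
                omega
              obtain ⟨ιl, instFl, instNl, Tl, Bl, hPTDl, hsizel, hclql⟩ :=
                ih (AD G A u w') hleafCard hleafGood
              -- attach bags
              have hNHDclqC : (HG G (Acore G A u)).IsClique ↑(NHD G A u w') :=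
                clique_of_subset_Nrg G (NW_not_Acore G hw'NW) (NHD_sub_Nrg_core G huA hw'NW)
              obtain ⟨i₁, hi₁⟩ := hclqCa (NHD G A u w') (NHD_subset_Acore G huA) hNHDclqC
              have hNHDclqL : (HG G (AD G A u w')).IsClique ↑(NHD G A u w') :=
                clique_of_subset_Nrg G (u_not_mem_AD G) (NHD_sub_Nrg_leaf G huA hw'NW)
              obtain ⟨i₂, hi₂⟩ := hclql (NHD G A u w')
                (Finset.subset_union_right) hNHDclqL
              -- gluing
              haveI := instFa; haveI := instFl
              have hglue := glue_PTD (V := V) hPTDa hPTDl (NHD G A u w') hi₁ hi₂ ?_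
              · refine ⟨ιa ⊕ ιl, inferInstance, ⟨Sum.inl (Classical.choice instNa)⟩,
                  glueG Ta Tl i₁ i₂, Sum.elim Ba Bl, ?_, ?_, ?_, ?_⟩
                · have hX : (Acore G A u ∪ reps.biUnion (fun C => ADC G A C)) ∪ AD G A u w'
                      = Acore G A u ∪ (insert C reps).biUnion (fun C => ADC G A C) := by
                    rw [Finset.biUnion_insert, ← hw'C, ADC_Dcomp]
                    ext z
                    simp only [Finset.mem_union]
                    tauto
                  rw [← hX]
                  exact hglue
                · rintro (i | i)
                  · exact hsizea i
                  · exact hsizel i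
                · intro K hK hKclq
                  obtain ⟨i, hi⟩ := hclqCa K hK hKclq
                  exact ⟨Sum.inl i, hi⟩
                · intro C' hC' K hK hKclq
                  rcases Finset.mem_insert.1 hC' with rfl | hC'
                  · rw [← hw'C, ADC_Dcomp] at hK hKclq
                    obtain ⟨i, hi⟩ := hclql K hK hKclq
                    exact ⟨Sum.inr i, hi⟩
                  · obtain ⟨i, hi⟩ := hclqLa C' hC' K hK hKclq
                    exact ⟨Sum.inl i, hi⟩
              · -- shared vertices land in NHD
                intro v hv1 hv2
                rcases Finset.mem_union.1 hv1 with hv | hv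
                · exact shared_core_AD G hv hv2
                · obtain ⟨C', hC', hvC'⟩ := Finset.mem_biUnion.1 hv
                  obtain ⟨w'', hw''NW, hw''C⟩ :=
                    Finset.mem_image.1 (hrepsub hC')
                  have hvAD'' : v ∈ AD G A u w'' := by
                    rw [← ADC_Dcomp (u := u) (w := w''), hw''C]
                    exact hvC'
                  have hne : Dcomp G A u w' ≠ Dcomp G A u w'' := by
                    rw [hw'C, hw''C]
                    rintro rfl
                    exact hC (hw''C ▸ hC')
                  exact shared_AD_AD G hne hv2 hvAD''
        -- apply the assembly to all components
        obtain ⟨ι, instF, instN, T, B, hPTD, hsize, hclqC, hclqL⟩ :=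
          hassemble ((NW G A u).image (fun w => Dcomp G A u w)) (le_refl _)
        have hXA : Acore G A u ∪
            ((NW G A u).image (fun w => Dcomp G A u w)).biUnion (fun C => ADC G A C) = A := by
          apply Finset.Subset.antisymm
          · refine Finset.union_subset (Acore_subset G) ?_
            intro z hz
            obtain ⟨C, hC, hzC⟩ := Finset.mem_biUnion.1 hz
            obtain ⟨w'', hw''NW, hw''C⟩ := Finset.mem_image.1 hC
            rw [← hw''C, ADC_Dcomp] at hzC
            exact AD_subset_A G hzC
          · intro z hz
            by_cases hzNW : z ∈ NW G A u
            · refine Finset.mem_union_right _ (Finset.mem_biUnion.2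
                ⟨Dcomp G A u z, Finset.mem_image_of_mem _ hzNW, ?_⟩)
              rw [ADC_Dcomp]
              exact Finset.mem_union_left _ (mem_Dcomp_self G hzNW)
            · exact Finset.mem_union_left _ (Finset.mem_sdiff.2 ⟨hz, hzNW⟩)
        rw [hXA] at hPTD
        refine ⟨ι, instF, instN, T, B, hPTD, hsize, ?_⟩
        intro K hK hKclq
        rcases clique_distrib G (u := u) hK hKclq with hKcore | ⟨w'', hw''NW, hKAD⟩
        · refine hclqC K hKcore ?_
          intro x hx y hy hne
          exact HG_anti G (Acore_subset G) (hKclq hx hy hne)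
            (hKcore (by exact_mod_cast hx)) (hKcore (by exact_mod_cast hy))
        · have hCim : Dcomp G A u w'' ∈ (NW G A u).image (fun w => Dcomp G A u w) :=
            Finset.mem_image_of_mem _ hw''NW
        
          refine hclqL (Dcomp G A u w'') hCim K ?_ ?_
          · rw [ADC_Dcomp]; exact hKAD
          · rw [ADC_Dcomp]
            intro x hx y hy hne
            exact HG_anti G (AD_subset_A G) (hKclq hx hy hne)
              (hKAD (by exact_mod_cast hx)) (hKAD (by exact_mod_cast hy))


end S0

/-- If `G` has no clique on `k` vertices (`k ≥ 2`) and no minimal separator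
of size larger than `s` (`s ≥ 1`), then the treewidth of `G` is at most `(k-1)·s³ - 1`. -/
theorem statement0 (G : SimpleGraph V) (k s : ℕ) (hk : 2 ≤ k) (hs : 1 ≤ s)
    (hclique : G.CliqueFree k)
    (hsep : ¬∃ X : Set V, MinSeparator G X ∧ s < X.ncard) :
    treewidth G ≤ (k - 1) * s ^ 3 - 1 := by
    classical
  have hGoodU : S0.Good G s Finset.univ := by
    intro r hr
    exact absurd (Finset.mem_univ r) hr
  obtain ⟨ι, instF, instN, T, B, hPTD, hsize, hclq⟩ :=
    S0.main G hk hs hclique hsep (Finset.univ.card) Finset.univ (le_refl _) hGoodU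
  haveI := instF
  haveI := instN
  set m := Fintype.card ι with hm
  have e : ι ≃ Fin m := Fintype.equivFin ι
  set T' : SimpleGraph (Fin m) := SimpleGraph.comap (e.symm) T with hT'
  let hom₁ : T' →g T := ⟨e.symm, fun h => h⟩
  let hom₂ : T →g T' := ⟨e, fun {a b} h => by
    show T.Adj (e.symm (e a)) (e.symm (e b))
    simpa using h⟩
  have hinj₁ : Function.Injective (hom₁ : Fin m → ι) := fun a b h => e.symm.injective h
  set B' : Fin m → Finset V := fun i => B (e.symm i) with hB'
  have htree' : T'.IsTree := by
    constructor
    · rw [SimpleGraph.connected_iff]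
      refine ⟨fun i j => ?_, ?_⟩
      · have hr := hPTD.tree.isConnected.preconnected (e.symm i) (e.symm j)
        have h2 : T'.Reachable (e (e.symm i)) (e (e.symm j)) := SimpleGraph.Reachable.map hom₂ hr
        simpa using h2
      · have : 0 < m := Fintype.card_pos
        exact ⟨⟨0, this⟩⟩
    · intro v c hc
      have : (c.map hom₁).IsCycle := by
        rw [SimpleGraph.Walk.map_isCycle_iff_of_injective hinj₁]
        exact hc
      exact hPTD.tree.IsAcyclic _ this
  have hdecomp : IsTreeDecomp G T' B' := by
    refine ⟨htree', ?_, ?_, ?_⟩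
    · intro v
      obtain ⟨i, hi⟩ := hPTD.cover v (Finset.mem_univ v)
      refine ⟨e i, ?_⟩
      simp only [hB', Equiv.symm_apply_apply]
      exact hi
    · intro a b hab
      have hclq2 : (S0.HG G Finset.univ).IsClique ↑({a, b} : Finset V) := by
        intro x hx y hy hne
        simp only [Finset.coe_insert, Set.mem_insert_iff, Finset.coe_singleton,
          Set.mem_singleton_iff] at hx hy
        have hadj : G.Adj x y := by
          rcases hx with rfl | rfl <;> rcases hy with rfl | rfl
          · exact absurd rfl hne
          · exact hab
          · exact hab.symm
          · exact absurd rfl hne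
        exact S0.HG_adj_of_G G hadj (Finset.mem_univ _) (Finset.mem_univ _)
      obtain ⟨i, hi⟩ := hclq ({a, b} : Finset V) (Finset.subset_univ _) hclq2
      refine ⟨e i, ?_, ?_⟩
      · simp only [hB', Equiv.symm_apply_apply]
        exact hi (by simp)
      · simp only [hB', Equiv.symm_apply_apply]
        exact hi (by simp)
    · intro v i j hvi hvj p hp x hx
      have hp' : (p.map hom₁).IsPath :=
        SimpleGraph.Walk.map_isPath_of_injective hinj₁ hp
      have hmemx : (e.symm x) ∈ (p.map hom₁).support := by
        rw [SimpleGraph.Walk.support_map]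
        exact List.mem_map_of_mem hx
      have := hPTD.coh v (e.symm i) (e.symm j) hvi hvj (p.map hom₁) hp'
        (e.symm x) hmemx
      exact this
  have hpos : 1 ≤ (k - 1) * s ^ 3 := by
    have h1 : 1 ≤ k - 1 := by omega
    have h2 : 1 ≤ s ^ 3 := Nat.one_le_pow _ _ hs
    exact Nat.one_le_iff_ne_zero.2 (Nat.mul_ne_zero (by omega) (by omega))
  apply Nat.sInf_le
  refine ⟨m, T', B', hdecomp, ?_⟩
  intro i
  have h1 := hsize (e.symm i)
  have h2 : (B' i).card ≤ (k - 1) * s ^ 3 := h1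
  generalize hN : (k - 1) * s ^ 3 = N at h2 hpos ⊢
  omega
end

section
/- Let G be a graph, let k ≥ 2 and s ≥ 1 be integers, and let Ω be a potential maximal clique in G with |Ω| > (k−1)·s^3. Then G contains either a clique of size k or a minimal separator of size larger than s. -/
open SimpleGraph

variable {V : Type} [Fintype V] [DecidableEq V]

namespace Stmt1

set_option linter.unusedSectionVars false

open SimpleGraph Walk

/-! ### Walk prefix/suffix helpers -/

lemma walk_prefix {G : SimpleGraph V} {a b : V} (p : G.Walk a b) (n : ℕ) {c : V}
    (hc : p.getVert n = c) :
    ∃ q : G.Walk a c, q.length = min n p.length ∧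
      ∀ x ∈ q.support, x ∈ p.support := by
  induction p generalizing n c with
  | nil =>
    have hb : c = _ := hc.symm.trans (Walk.getVert_of_length_le _ (by simp))
    subst hb
    exact ⟨Walk.nil, by simp, by simp⟩
  | @cons u v w h q ih =>
    cases n with
    | zero =>
      have hb : c = u := hc.symm.trans (Walk.getVert_zero _)
      subst hb
      exact ⟨Walk.nil, by simp, by simp⟩
    | succ n =>
      obtain ⟨r, hr1, hr2⟩ := ih n hc
      refine ⟨Walk.cons h r, ?_, ?_⟩
      · simp [Walk.length_cons, hr1, Nat.succ_min_succ]
      · intro x hx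
        rw [Walk.support_cons] at hx
        rw [Walk.support_cons]
        rcases List.mem_cons.1 hx with hx | hx
        · exact List.mem_cons.2 (Or.inl hx)
        · exact List.mem_cons.2 (Or.inr (hr2 x hx))

lemma walk_suffix {G : SimpleGraph V} {a b : V} (p : G.Walk a b) (n : ℕ) {c : V}
    (hc : p.getVert n = c) :
    ∃ r : G.Walk c b, r.length = p.length - n ∧
      ∀ x ∈ r.support, x ∈ p.support := by
  induction p generalizing n c with
  | nil =>
    have hb : c = _ := hc.symm.trans (Walk.getVert_of_length_le _ (by simp))
    subst hb
    exact ⟨Walk.nil, by simp, by simp⟩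
  | @cons u v w h q ih =>
    cases n with
    | zero =>
      have hb : c = u := hc.symm.trans (Walk.getVert_zero _)
      subst hb
      exact ⟨Walk.cons h q, by simp, by simp⟩
    | succ n =>
      obtain ⟨r, hr1, hr2⟩ := ih n hc
      refine ⟨r, ?_, ?_⟩
      · simp [Walk.length_cons, hr1]
      · intro x hx
        rw [Walk.support_cons]
        exact List.mem_cons.2 (Or.inr (hr2 x hx))

lemma getVert_mem_support' {G : SimpleGraph V} {a b : V} (p : G.Walk a b) (n : ℕ) :
    p.getVert n ∈ p.support := by
  rcases le_or_gt n p.length with h | h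
  · exact Walk.mem_support_iff_exists_getVert.2 ⟨n, rfl, h⟩
  · rw [Walk.getVert_of_length_le p h.le]
    exact Walk.end_mem_support p

/-- conversion of walks along `G ≤ H` keeping the support. -/
lemma walk_le {G H : SimpleGraph V} (hGH : G ≤ H) {a b : V} (p : G.Walk a b) :
    ∃ q : H.Walk a b, ∀ x, x ∈ q.support ↔ x ∈ p.support := by
  induction p with
  | nil => exact ⟨Walk.nil, by simp⟩
  | @cons u v w h q ih =>
    obtain ⟨r, hr⟩ := ih
    exact ⟨Walk.cons (hGH h) r, by simp [Walk.support_cons, hr]⟩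

/-! ### Components of `G - Ω` -/

/-- vertices reachable from `w` by a walk entirely avoiding `Ω`. -/
def cmp (G : SimpleGraph V) (Ω : Set V) (w : V) : Set V :=
  {u | ∃ p : G.Walk w u, ∀ x ∈ p.support, x ∉ Ω}

/-- the neighborhood boundary of the component of `w`. -/
def bdry (G : SimpleGraph V) (Ω : Set V) (w : V) : Set V :=
  {v | v ∉ cmp G Ω w ∧ ∃ u ∈ cmp G Ω w, G.Adj u v}

variable {G : SimpleGraph V} {Ω : Set V} {w : V}

lemma mem_cmp_self (hw : w ∉ Ω) : w ∈ cmp G Ω w :=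
  ⟨Walk.nil, by simpa using hw⟩

lemma cmp_not_mem {u : V} (hu : u ∈ cmp G Ω w) : u ∉ Ω := by
  obtain ⟨p, hp⟩ := hu
  exact hp u (Walk.end_mem_support p)

lemma cmp_adj_closed {u v : V} (hu : u ∈ cmp G Ω w) (huv : G.Adj u v) (hv : v ∉ Ω) :
    v ∈ cmp G Ω w := by
  obtain ⟨p, hp⟩ := hu
  refine ⟨p.concat huv, ?_⟩
  intro x hx
  rw [Walk.support_concat, List.mem_append] at hx
  rcases hx with hx | hx
  · exact hp x hx
  · simp only [List.mem_singleton] at hx; exact hx ▸ hv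

lemma bdry_subset (hb : v ∈ bdry G Ω w) : v ∈ Ω := by
  obtain ⟨hv, u, hu, huv⟩ := hb
  by_contra hvo
  exact hv (cmp_adj_closed hu huv hvo)

lemma cmp_mem_of_mem {u : V} (hu : u ∈ cmp G Ω w) {v : V} (hv : v ∈ cmp G Ω u) :
    v ∈ cmp G Ω w := by
  obtain ⟨p, hp⟩ := hu
  obtain ⟨q, hq⟩ := hv
  refine ⟨p.append q, ?_⟩
  intro x hx
  rw [Walk.mem_support_append_iff] at hx
  rcases hx with hx | hx
  · exact hp x hx
  · exact hq x hx

/-- exit lemma: a walk from inside the component to outside it meets the boundary. -/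
lemma exit_lemma {z r : V} (p : G.Walk r z) :
    r ∈ cmp G Ω w → z ∉ cmp G Ω w → ∃ v ∈ p.support, v ∈ bdry G Ω w := by
  induction p with
  | nil => exact fun hr hz => absurd hr hz
  | @cons u v z' h q ih =>
    intro hr hz
    by_cases hv : v ∈ cmp G Ω w
    · obtain ⟨t, ht, htb⟩ := ih hv hz
      exact ⟨t, by simp [Walk.support_cons, ht], htb⟩
    · exact ⟨v, by simp [Walk.support_cons], ⟨hv, u, hr, h⟩⟩

/-- entry lemma: a walk from the component to `z ∈ Ω` internally avoiding `Ω`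
  puts `z` on the boundary. -/
lemma entry_lemma {z r : V} (p : G.Walk r z) :
    z ∈ Ω → r ∈ cmp G Ω w → (∀ t ∈ p.support, t ∉ Ω ∨ t = z) → z ∈ bdry G Ω w := by
  induction p with
  | nil => exact fun hz hr _ => absurd hz (cmp_not_mem hr)
  | @cons u v z' h q ih =>
    intro hz hr hp
    by_cases hvz : v = z'
    · subst hvz
      exact ⟨fun hc => (cmp_not_mem hc) hz, u, hr, h⟩
    · have hv : v ∉ Ω := by
        rcases hp v (by simp [Walk.support_cons]) with h' | h'
        · exact h'
        · exact absurd h' hvz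
      exact ih hz (cmp_adj_closed hr h hv) (fun t ht => hp t (by simp [Walk.support_cons, ht]))

/-! ### Existence of inclusion-minimal separators -/

lemma sep_compl {x y : V} (hne : x ≠ y) (hnadj : ¬G.Adj x y) :
    Separates G ({x, y}ᶜ : Set V) x y := by
  refine ⟨by simp, by simp, ?_⟩
  intro p
  cases p with
  | nil => exact absurd rfl hne
  | @cons u v w h q =>
    refine ⟨v, by simp [Walk.support_cons, Walk.start_mem_support], ?_⟩
    simp only [Set.mem_compl_iff, Set.mem_insert_iff, Set.mem_singleton_iff]
    rintro (rfl | rfl)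
    · exact G.loopless.irrefl _ h
    · exact hnadj h

lemma exists_minimal_sep_aux {x y : V} :
    ∀ (m : ℕ) (X : Set V), X.ncard ≤ m → Separates G X x y →
      ∃ X' ⊆ X, Separates G X' x y ∧ ∀ Y ⊆ X', Separates G Y x y → Y = X' := by
  intro m
  induction m with
  | zero =>
    intro X hX hsep
    have : X = ∅ := by
      rw [← Set.ncard_eq_zero (Set.toFinite X)]; omega
    subst this
    exact ⟨∅, subset_rfl, hsep, fun Y hY _ => Set.subset_eq_empty hY rfl⟩
  | succ m ih =>
    intro X hX hsep
    by_cases h : ∃ Y ⊂ X, Separates G Y x y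
    · obtain ⟨Y, hYX, hYsep⟩ := h
      have : Y.ncard ≤ m := by
        have := Set.ncard_lt_ncard hYX (Set.toFinite X)
        omega
      obtain ⟨X', hX', hsep', hmin⟩ := ih Y this hYsep
      exact ⟨X', hX'.trans hYX.subset, hsep', hmin⟩
    · push_neg at h
      refine ⟨X, subset_rfl, hsep, fun Y hY hYsep => ?_⟩
      by_contra hne
      exact h Y (ssubset_of_subset_of_ne hY hne) hYsep

lemma exists_minimal_sep {x y : V} (hne : x ≠ y) (hnadj : ¬G.Adj x y) :
    ∃ X : Set V, Separates G X x y ∧ ∀ Y ⊆ X, Separates G Y x y → Y = X := by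
  obtain ⟨X', _, hsep, hmin⟩ := exists_minimal_sep_aux (G := G)
    (({x, y}ᶜ : Set V).ncard) _ le_rfl (sep_compl hne hnadj)
  exact ⟨X', hsep, hmin⟩


/-! ### The surgery lemma: no cross edges in a minimal chordal completion -/

lemma no_cross_edge {G H : SimpleGraph V} (hGH : G ≤ H) (hch : IsChordal H)
    (hmin : ∀ H' : SimpleGraph V, G ≤ H' → H' ≤ H → IsChordal H' → H' = H)
    (S : Set V) (hScl : H.IsClique S) (a : V) {u v : V} (hu : u ∈ cmp G S a)
    (hv : v ∉ cmp G S a) (hvS : v ∉ S) : ¬H.Adj u v := by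
  classical
  set A : Set V := cmp G S a with hA
  set B : Set V := {t : V | t ∉ A ∧ t ∉ S} with hB
  set H' : SimpleGraph V :=
    { Adj := fun p q => H.Adj p q ∧ ¬(p ∈ A ∧ q ∈ B) ∧ ¬(p ∈ B ∧ q ∈ A)
      symm := ⟨fun p q h => ⟨h.1.symm, fun hq => h.2.2 ⟨hq.2, hq.1⟩,
        fun hq => h.2.1 ⟨hq.2, hq.1⟩⟩⟩
      loopless := ⟨fun p h => H.loopless.irrefl p h.1⟩ } with hH'
  have hH'adj : ∀ p q : V, H'.Adj p q ↔
      (H.Adj p q ∧ ¬(p ∈ A ∧ q ∈ B) ∧ ¬(p ∈ B ∧ q ∈ A)) := fun p q => Iff.rfl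
  have hH'le : H' ≤ H := fun p q h => h.1
  have hGle : G ≤ H' := by
    intro p q hpq
    refine ⟨hGH hpq, ?_, ?_⟩
    · rintro ⟨hpA, hqB⟩; exact hqB.1 (cmp_adj_closed hpA hpq hqB.2)
    · rintro ⟨hpB, hqA⟩; exact hpB.1 (cmp_adj_closed hqA hpq.symm hpB.2)
  have hAS : ∀ t, t ∈ A → t ∈ S → False := fun t hA' hS' => cmp_not_mem hA' hS'
  have hBS : ∀ t, t ∈ B → t ∈ S → False := fun t hB' => hB'.2
  have hABf : ∀ t, t ∈ A → t ∈ B → False := fun t hA' hB' => hB'.1 hA'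
  have htri : ∀ t : V, t ∈ S ∨ t ∈ A ∨ t ∈ B := by
    intro t
    by_cases h1 : t ∈ S
    · exact Or.inl h1
    by_cases h2 : t ∈ A
    · exact Or.inr (Or.inl h2)
    · exact Or.inr (Or.inr ⟨h2, h1⟩)
  -- chordality of H'
  have hH'ch : IsChordal H' := by
    rintro ⟨n, f, hn4, hinj, hiff⟩
    haveI : NeZero n := ⟨by omega⟩
    have hcast_ne : ∀ m : ℕ, 1 ≤ m → m < n → ((m : ZMod n) ≠ 0) := by
      intro m h1 h2 hc
      have hval := ZMod.val_cast_of_lt h2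
      rw [hc] at hval
      simp [ZMod.val_zero] at hval
      omega
    have hone : ∀ τ' : ZMod n, τ' + 1 ≠ τ' := by
      intro τ' hc
      have h10 : (1 : ZMod n) = 0 := by linear_combination hc
      exact hcast_ne 1 le_rfl (by omega) (by exact_mod_cast h10)
    have hcons : ∀ i : ZMod n, H'.Adj (f i) (f (i + 1)) :=
      fun i => (hiff i (i + 1)).2 (Or.inl rfl)
    have stepA : ∀ i : ZMod n, f i ∈ A → f (i + 1) ∉ S → f (i + 1) ∈ A := by
      intro i hA' hS'
      rcases htri (f (i + 1)) with h | h | h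
      · exact absurd h hS'
      · exact h
      · exact absurd ⟨hA', h⟩ (hcons i).2.1
    have stepB : ∀ i : ZMod n, f i ∈ B → f (i + 1) ∉ S → f (i + 1) ∈ B := by
      intro i hB' hS'
      rcases htri (f (i + 1)) with h | h | h
      · exact absurd h hS'
      · exact absurd ⟨hB', h⟩ (hcons i).2.2
      · exact h
    have runA : ∀ (m : ℕ) (i : ZMod n), f i ∈ A →
        (∀ l : ℕ, 1 ≤ l → l ≤ m → f (i + (l : ZMod n)) ∉ S) → f (i + (m : ZMod n)) ∈ A := by
      intro m
      induction m with
      | zero => intro i hA' _; simpa using hA'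
      | succ m ih =>
        intro i hA' hS'
        have h1 : f (i + (m : ZMod n)) ∈ A :=
          ih i hA' (fun l hl1 hl2 => hS' l hl1 (le_trans hl2 (Nat.le_succ m)))
        have heq : (i + ((m + 1 : ℕ) : ZMod n)) = (i + (m : ZMod n)) + 1 := by
          push_cast; ring
        rw [heq]
        refine stepA _ h1 ?_
        rw [← heq]
        exact hS' (m + 1) (by omega) le_rfl
    have runB : ∀ (m : ℕ) (i : ZMod n), f i ∈ B →
        (∀ l : ℕ, 1 ≤ l → l ≤ m → f (i + (l : ZMod n)) ∉ S) → f (i + (m : ZMod n)) ∈ B := by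
      intro m
      induction m with
      | zero => intro i hB' _; simpa using hB'
      | succ m ih =>
        intro i hB' hS'
        have h1 : f (i + (m : ZMod n)) ∈ B :=
          ih i hB' (fun l hl1 hl2 => hS' l hl1 (le_trans hl2 (Nat.le_succ m)))
        have heq : (i + ((m + 1 : ℕ) : ZMod n)) = (i + (m : ZMod n)) + 1 := by
          push_cast; ring
        rw [heq]
        refine stepB _ h1 ?_
        rw [← heq]
        exact hS' (m + 1) (by omega) le_rfl
    by_cases hexA : ∃ i, f i ∈ A
    case neg =>
      push_neg at hexA
      refine hch ⟨n, f, hn4, hinj, fun i j => ⟨fun hHa => ?_, fun hc => ((hiff i j).2 hc).1⟩⟩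
      exact (hiff i j).1 ⟨hHa, fun h => hexA i h.1, fun h => hexA j h.2⟩
    by_cases hexB : ∃ i, f i ∈ B
    case neg =>
      push_neg at hexB
      refine hch ⟨n, f, hn4, hinj, fun i j => ⟨fun hHa => ?_, fun hc => ((hiff i j).2 hc).1⟩⟩
      exact (hiff i j).1 ⟨hHa, fun h => hexB j h.2, fun h => hexB i h.1⟩
    obtain ⟨iA, hiA⟩ := hexA
    obtain ⟨iB, hiB⟩ := hexB
    have hneq : iA ≠ iB := by
      intro h
      rw [h] at hiA
      exact hABf _ hiA hiB
    set m₀ := (iB - iA).val with hm₀def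
    set m₁ := (iA - iB).val with hm₁def
    have hm₀cast : ((m₀ : ℕ) : ZMod n) = iB - iA := ZMod.natCast_rightInverse _
    have hm₁cast : ((m₁ : ℕ) : ZMod n) = iA - iB := ZMod.natCast_rightInverse _
    have hiAm₀ : iA + (m₀ : ZMod n) = iB := by rw [hm₀cast]; ring
    have hiBm₁ : iB + (m₁ : ZMod n) = iA := by rw [hm₁cast]; ring
    have hm₀pos : 1 ≤ m₀ := by
      rcases Nat.eq_zero_or_pos m₀ with h | h
      · exfalso
        have : iB - iA = 0 := by
          have := hm₀cast
          rw [h] at this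
          simpa using this.symm
        have h2 : iA = iB := by linear_combination -this
        exact hneq h2
      · exact h
    have hm₁pos : 1 ≤ m₁ := by
      rcases Nat.eq_zero_or_pos m₁ with h | h
      · exfalso
        have : iA - iB = 0 := by
          have := hm₁cast
          rw [h] at this
          simpa using this.symm
        have h2 : iA = iB := by linear_combination this
        exact hneq h2
      · exact h
    have hm₀lt : m₀ < n := ZMod.val_lt _
    have hm₁lt : m₁ < n := ZMod.val_lt _
    have hmsum : m₀ + m₁ = n := by
      have hz : ((m₀ + m₁ : ℕ) : ZMod n) = 0 := by
        push_cast
        rw [hm₀cast, hm₁cast]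
        ring
      have hdvd : n ∣ (m₀ + m₁) := by
        rwa [ZMod.natCast_eq_zero_iff] at hz
      obtain ⟨k, hk⟩ := hdvd
      rcases Nat.lt_or_ge k 2 with hk2 | hk2
      · interval_cases k <;> omega
      · exfalso
        have h2 : n * 2 ≤ n * k := Nat.mul_le_mul_left n hk2
        omega
    -- find the first S-position after iA
    have hfind1 : ∃ l : ℕ, (1 ≤ l ∧ l ≤ m₀) ∧ f (iA + (l : ZMod n)) ∈ S := by
      by_contra hc
      push_neg at hc
      have := runA m₀ iA hiA (fun l h1 h2 => hc l ⟨h1, h2⟩)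
      rw [hiAm₀] at this
      exact hABf _ this hiB
    have hfind2 : ∃ l : ℕ, (1 ≤ l ∧ l ≤ m₁) ∧ f (iB + (l : ZMod n)) ∈ S := by
      by_contra hc
      push_neg at hc
      have := runB m₁ iB hiB (fun l h1 h2 => hc l ⟨h1, h2⟩)
      rw [hiBm₁] at this
      exact hABf _ hiA this
    obtain ⟨l₁, ⟨hl₁1, hl₁m⟩, hl₁S⟩ := hfind1
    obtain ⟨l₂, ⟨hl₂1, hl₂m⟩, hl₂S⟩ := hfind2
    have hl₁lt : l₁ < m₀ := by
      rcases lt_or_eq_of_le hl₁m with h | h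
      · exact h
      · exfalso
        rw [h, hiAm₀] at hl₁S
        exact hBS _ hiB hl₁S
    have hl₂lt : l₂ < m₁ := by
      rcases lt_or_eq_of_le hl₂m with h | h
      · exact h
      · exfalso
        rw [h, hiBm₁] at hl₂S
        exact hAS _ hiA hl₂S
    set σ₁ := iA + (l₁ : ZMod n) with hσ₁def
    set σ₂ := iB + (l₂ : ZMod n) with hσ₂def
    have hσ₂eq : σ₂ = iA + ((m₀ + l₂ : ℕ) : ZMod n) := by
      rw [hσ₂def, ← hiAm₀]
      push_cast
      ring
    have hσne : σ₁ ≠ σ₂ := by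
      intro h
      rw [hσ₁def, hσ₂eq] at h
      have h2 : ((l₁ : ℕ) : ZMod n) = ((m₀ + l₂ : ℕ) : ZMod n) := by
        have := h
        linear_combination this
      rw [ZMod.natCast_eq_natCast_iff] at h2
      have hcl1 : l₁ % n = l₁ := Nat.mod_eq_of_lt (by omega)
      have hcl2 : (m₀ + l₂) % n = m₀ + l₂ := Nat.mod_eq_of_lt (by omega)
      have := h2
      unfold Nat.ModEq at this
      omega
    -- two consecutive S positions
    have hSadj : ∀ ζ ξ : ZMod n, ζ ≠ ξ → f ζ ∈ S → f ξ ∈ S → (ξ = ζ + 1 ∨ ζ = ξ + 1) := by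
      intro ζ ξ hne hζ hξ
      refine (hiff ζ ξ).1 ⟨hScl hζ hξ (fun h => hne (hinj h)), fun h => hAS _ h.1 hζ,
        fun h => hBS _ h.1 hζ⟩
    obtain ⟨τ, hτS, hτ1S⟩ : ∃ τ : ZMod n, f τ ∈ S ∧ f (τ + 1) ∈ S := by
      rcases hSadj σ₁ σ₂ hσne hl₁S hl₂S with h | h
      · exact ⟨σ₁, hl₁S, h ▸ hl₂S⟩
      · exact ⟨σ₂, hl₂S, h ▸ hl₁S⟩
    have hSsub : ∀ ζ : ZMod n, f ζ ∈ S → ζ = τ ∨ ζ = τ + 1 := by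
      intro ζ hζ
      by_contra hc
      push_neg at hc
      obtain ⟨h1, h2⟩ := hc
      rcases hSadj ζ τ h1 hζ hτS with c1 | c1
      · rcases hSadj ζ (τ + 1) h2 hζ hτ1S with c2 | c2
        · -- τ + 1 = ζ + 1 and τ = ζ + 1
          have hτζ : τ = ζ := by linear_combination c2
          rw [hτζ] at c1
          exact hone ζ c1.symm
        · -- ζ = τ + 2 and τ = ζ + 1 : 3 = 0
          have h30 : ((3 : ℕ) : ZMod n) = 0 := by
            push_cast
            linear_combination -c1 - c2
          exact hcast_ne 3 (by omega) (by omega) h30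
      · exact h2 c1
    have hρ1 : (τ + 1 + 1) ≠ τ := by
      intro hc
      have h20 : ((2 : ℕ) : ZMod n) = 0 := by push_cast; linear_combination hc
      exact hcast_ne 2 (by omega) (by omega) h20
    have hρ2 : (τ + 1 + 1) ≠ τ + 1 := hone (τ + 1)
    have hρS : f (τ + 1 + 1) ∉ S := by
      intro h
      rcases hSsub _ h with h' | h'
      · exact hρ1 h'
      · exact hρ2 h'
    -- every position other than τ, τ+1 is reachable from ρ by an S-free run
    have key : ∀ ζ : ZMod n, ζ ≠ τ → ζ ≠ τ + 1 → ∃ l : ℕ,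
        ζ = (τ + 1 + 1) + (l : ZMod n) ∧
        ∀ l' : ℕ, 1 ≤ l' → l' ≤ l → f ((τ + 1 + 1) + (l' : ZMod n)) ∉ S := by
      intro ζ h1 h2
      set ρ := τ + 1 + 1 with hρdef
      set l := (ζ - ρ).val with hldef
      have hlcast : ((l : ℕ) : ZMod n) = ζ - ρ := ZMod.natCast_rightInverse _
      have hlval : ρ + (l : ZMod n) = ζ := by rw [hlcast]; ring
      have hl_lt : l < n := ZMod.val_lt _
      have hl3 : l ≤ n - 3 := by
        by_contra hcon
        have : l = n - 2 ∨ l = n - 1 := by omega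
        rcases this with h | h
        · apply h1
          rw [← hlval, h, hρdef]
          have hn2 : ((n - 2 : ℕ) : ZMod n) = - ((2 : ℕ) : ZMod n) := by
            have : ((n - 2 : ℕ) : ZMod n) + ((2 : ℕ) : ZMod n) = ((n : ℕ) : ZMod n) := by
              rw [← Nat.cast_add]
              congr 1
              omega
            rw [ZMod.natCast_self] at this
            linear_combination this
          rw [hn2]
          push_cast
          ring
        · apply h2
          rw [← hlval, h, hρdef]
          have hn1 : ((n - 1 : ℕ) : ZMod n) = - ((1 : ℕ) : ZMod n) := by
            have : ((n - 1 : ℕ) : ZMod n) + ((1 : ℕ) : ZMod n) = ((n : ℕ) : ZMod n) := by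
              rw [← Nat.cast_add]
              congr 1
              omega
            rw [ZMod.natCast_self] at this
            linear_combination this
          rw [hn1]
          push_cast
          ring
      refine ⟨l, hlval.symm, ?_⟩
      intro l' hl'1 hl'l hS'
      rcases hSsub _ hS' with h' | h'
      · -- ρ + l' = τ : l' + 2 ≡ 0
        have : ((l' + 2 : ℕ) : ZMod n) = 0 := by
          push_cast
          linear_combination h'
        exact hcast_ne (l' + 2) (by omega) (by omega) this
      · have : ((l' + 1 : ℕ) : ZMod n) = 0 := by
          push_cast
          linear_combination h'
        exact hcast_ne (l' + 1) (by omega) (by omega) this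
    rcases htri (f (τ + 1 + 1)) with h | hρA | hρB
    · exact hρS h
    · -- then B is empty along the run: contradiction with iB
      have hτiB : iB ≠ τ := fun h => hBS _ hiB (h ▸ hτS)
      have hτ1iB : iB ≠ τ + 1 := fun h => hBS _ hiB (h ▸ hτ1S)
      obtain ⟨l, hζ, hSfree⟩ := key iB hτiB hτ1iB
      have := runA l (τ + 1 + 1) hρA hSfree
      rw [← hζ] at this
      exact hABf _ this hiB
    · have hτiA : iA ≠ τ := fun h => hAS _ hiA (h ▸ hτS)
      have hτ1iA : iA ≠ τ + 1 := fun h => hAS _ hiA (h ▸ hτ1S)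
      obtain ⟨l, hζ, hSfree⟩ := key iA hτiA hτ1iA
      have := runB l (τ + 1 + 1) hρB hSfree
      rw [← hζ] at this
      exact hABf _ hiA this
  -- conclude
  have hE : H' = H := hmin H' hGle hH'le hH'ch
  intro hadj
  rw [← hE] at hadj
  exact hadj.2.1 ⟨hu, hv, hvS⟩


/-! ### Cliquish property of maximal cliques in minimal completions -/

lemma link_all {G H : SimpleGraph V} (hGH : G ≤ H) (hch : IsChordal H)
    (hmin : ∀ H' : SimpleGraph V, G ≤ H' → H' ≤ H → IsChordal H' → H' = H)
    {Ω : Set V} (hcl : H.IsClique Ω) {a b : V} (ha : a ∈ Ω) (hb : b ∈ Ω) (hne : a ≠ b) :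
    ∃ p : G.Walk a b, ∀ x ∈ p.support, x ∉ Ω ∨ x = a ∨ x = b := by
  by_contra hc
  push_neg at hc
  set S : Set V := Ω \ {a, b} with hS
  have hScl : H.IsClique S := hcl.subset Set.diff_subset
  have haS : a ∉ S := by simp [hS]
  have hbS : b ∉ S := by simp [hS]
  have hbcmp : b ∉ cmp G S a := by
    rintro ⟨p, hp⟩
    obtain ⟨x, hx, hxΩ, hxa, hxb⟩ := hc p
    exact hp x hx ⟨hxΩ, by simp [hxa, hxb]⟩
  exact no_cross_edge hGH hch hmin S hScl a (mem_cmp_self haS) hbcmp hbS (hcl ha hb hne)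

/-! ### Distance within a finite vertex set -/

def walkIn (H : SimpleGraph V) (D : Finset V) (x y : V) : Set ℕ :=
  {m : ℕ | ∃ p : H.Walk x y, p.length = m ∧ ∀ t ∈ p.support, t ∈ D}

noncomputable def dIn (H : SimpleGraph V) (D : Finset V) (x y : V) : ℕ :=
  sInf (walkIn H D x y)

lemma dIn_le {H : SimpleGraph V} {D : Finset V} {x y : V} {p : H.Walk x y}
    (hp : ∀ t ∈ p.support, t ∈ D) : dIn H D x y ≤ p.length :=
  Nat.sInf_le ⟨p, rfl, hp⟩

lemma dIn_spec {H : SimpleGraph V} {D : Finset V} {x y : V}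
    (hne : (walkIn H D x y).Nonempty) :
    ∃ p : H.Walk x y, p.length = dIn H D x y ∧ ∀ t ∈ p.support, t ∈ D := by
  obtain ⟨p, h1, h2⟩ := Nat.sInf_mem hne
  exact ⟨p, h1, h2⟩

lemma dIn_self {H : SimpleGraph V} {D : Finset V} {x : V} (hx : x ∈ D) :
    dIn H D x x = 0 := by
  have h := dIn_le (p := (Walk.nil : H.Walk x x)) (by
    intro t ht
    rw [Walk.support_nil, List.mem_singleton] at ht
    exact ht ▸ hx)
  simpa using h

lemma eq_of_dIn_zero {H : SimpleGraph V} {D : Finset V} {x y : V}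
    (hne : (walkIn H D x y).Nonempty) (h : dIn H D x y = 0) : x = y := by
  obtain ⟨p, hlen, _⟩ := dIn_spec hne
  exact Walk.eq_of_length_eq_zero (hlen.trans h)

/-- shortest walks avoid any vertex realizing the maximum distance from the root. -/
lemma far_avoid {H : SimpleGraph V} {D : Finset V}
    (hconn : ∀ x ∈ D, ∀ y ∈ D, (walkIn H D x y).Nonempty)
    {r c : V} (hr : r ∈ D) (hmax : ∀ x ∈ D, dIn H D r x ≤ dIn H D r c)
    {u : V} (hu : u ∈ D) (huc : u ≠ c) :
    ∃ p : H.Walk r u, (∀ t ∈ p.support, t ∈ D) ∧ c ∉ p.support := by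
  obtain ⟨p, hlen, hsupp⟩ := dIn_spec (hconn r hr u hu)
  by_cases hcp : c ∈ p.support
  · exfalso
    have h1 : dIn H D r c ≤ (p.takeUntil c hcp).length :=
      dIn_le (fun t ht => hsupp t (Walk.support_takeUntil_subset _ _ ht))
    have h2 : 1 ≤ (p.dropUntil c hcp).length := by
      by_contra h
      push_neg at h
      have h0 : (p.dropUntil c hcp).length = 0 := by omega
      exact huc (Walk.eq_of_length_eq_zero h0).symm
    have h3 : (p.takeUntil c hcp).length + (p.dropUntil c hcp).length = p.length := by
      have := congrArg Walk.length (p.take_spec hcp)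
      rwa [Walk.length_append] at this
    have h4 := hmax u hu
    omega
  · exact ⟨p, hsupp, hcp⟩

/-! ### The chordal domination lemma -/

lemma dominating_clique {H : SimpleGraph V} (hch : IsChordal H) {Ω : Set V}
    (hcl : H.IsClique Ω) (D : Finset V) :
    D.Nonempty →
    (∀ x ∈ D, ∀ y ∈ D, (walkIn H D x y).Nonempty) →
    (∀ x ∈ D, x ∉ Ω) →
    (∀ v ∈ Ω, ∃ u ∈ D, H.Adj v u) →
    ∃ c ∈ D, ∀ v ∈ Ω, H.Adj c v := by
  induction D using Finset.strongInduction with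
  | _ D ih =>
  intro hDne hconn hdisj hdom
  by_cases hcard : D.card = 1
  · obtain ⟨c, hc⟩ := Finset.card_eq_one.1 hcard
    subst hc
    refine ⟨c, Finset.mem_singleton_self c, fun v hv => ?_⟩
    obtain ⟨u, hu, hadj⟩ := hdom v hv
    rw [Finset.mem_singleton] at hu
    exact (hu ▸ hadj).symm
  have hcard2 : 2 ≤ D.card := by
    have := Finset.card_pos.2 hDne
    omega
  obtain ⟨r, hr⟩ := hDne
  obtain ⟨c₁, hc₁D, hc₁max⟩ := D.exists_max_image (fun x => dIn H D r x) ⟨r, hr⟩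
  have hc₁r : c₁ ≠ r := by
    obtain ⟨w', hw'D, hw'ne⟩ := Finset.exists_mem_ne (s := D) (by omega) r
    intro h
    have h1 : dIn H D r w' ≠ 0 := fun h0 =>
      hw'ne (eq_of_dIn_zero (hconn r hr w' hw'D) h0).symm
    have h2 := hc₁max w' hw'D
    rw [h, dIn_self hr] at h2
    omega
  -- connectivity of D.erase c₁
  have hconn1 : ∀ x ∈ D.erase c₁, ∀ y ∈ D.erase c₁, (walkIn H (D.erase c₁) x y).Nonempty := by
    intro x hx y hy
    obtain ⟨px, hpx, hpxc⟩ := far_avoid hconn hr hc₁max (Finset.mem_of_mem_erase hx)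
      (Finset.ne_of_mem_erase hx)
    obtain ⟨py, hpy, hpyc⟩ := far_avoid hconn hr hc₁max (Finset.mem_of_mem_erase hy)
      (Finset.ne_of_mem_erase hy)
    refine ⟨(px.reverse.append py).length, px.reverse.append py, rfl, ?_⟩
    intro t ht
    rw [Walk.mem_support_append_iff] at ht
    rcases ht with ht | ht
    · rw [Walk.support_reverse, List.mem_reverse] at ht
      exact Finset.mem_erase.2 ⟨fun h => hpxc (h ▸ ht), hpx t ht⟩
    · exact Finset.mem_erase.2 ⟨fun h => hpyc (h ▸ ht), hpy t ht⟩
  by_cases hdom1 : ∀ v ∈ Ω, ∃ u ∈ D.erase c₁, H.Adj v u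
  · obtain ⟨c, hcD, hc⟩ := ih (D.erase c₁) (Finset.erase_ssubset hc₁D)
      ⟨r, Finset.mem_erase.2 ⟨hc₁r.symm, hr⟩⟩ hconn1
      (fun x hx => hdisj x (Finset.mem_of_mem_erase hx)) hdom1
    exact ⟨c, Finset.mem_of_mem_erase hcD, hc⟩
  -- second farthest point, from c₁
  obtain ⟨c₂, hc₂D, hc₂max⟩ := D.exists_max_image (fun x => dIn H D c₁ x) ⟨r, hr⟩
  have hc₂c₁ : c₂ ≠ c₁ := by
    obtain ⟨w', hw'D, hw'ne⟩ := Finset.exists_mem_ne (s := D) (by omega) c₁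
    intro h
    have h1 : dIn H D c₁ w' ≠ 0 := fun h0 =>
      hw'ne (eq_of_dIn_zero (hconn c₁ hc₁D w' hw'D) h0).symm
    have h2 := hc₂max w' hw'D
    rw [h, dIn_self hc₁D] at h2
    omega
  have hconn2 : ∀ x ∈ D.erase c₂, ∀ y ∈ D.erase c₂, (walkIn H (D.erase c₂) x y).Nonempty := by
    intro x hx y hy
    obtain ⟨px, hpx, hpxc⟩ := far_avoid hconn hc₁D hc₂max (Finset.mem_of_mem_erase hx)
      (Finset.ne_of_mem_erase hx)
    obtain ⟨py, hpy, hpyc⟩ := far_avoid hconn hc₁D hc₂max (Finset.mem_of_mem_erase hy)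
      (Finset.ne_of_mem_erase hy)
    refine ⟨(px.reverse.append py).length, px.reverse.append py, rfl, ?_⟩
    intro t ht
    rw [Walk.mem_support_append_iff] at ht
    rcases ht with ht | ht
    · rw [Walk.support_reverse, List.mem_reverse] at ht
      exact Finset.mem_erase.2 ⟨fun h => hpxc (h ▸ ht), hpx t ht⟩
    · exact Finset.mem_erase.2 ⟨fun h => hpyc (h ▸ ht), hpy t ht⟩
  by_cases hdom2 : ∀ v ∈ Ω, ∃ u ∈ D.erase c₂, H.Adj v u
  · obtain ⟨c, hcD, hc⟩ := ih (D.erase c₂) (Finset.erase_ssubset hc₂D)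
      ⟨c₁, Finset.mem_erase.2 ⟨hc₂c₁.symm, hc₁D⟩⟩ hconn2
      (fun x hx => hdisj x (Finset.mem_of_mem_erase hx)) hdom2
    exact ⟨c, Finset.mem_of_mem_erase hcD, hc⟩
  -- both fail: construct a hole
  exfalso
  push_neg at hdom1 hdom2
  obtain ⟨v₁, hv₁Ω, hv₁⟩ := hdom1
  obtain ⟨v₂, hv₂Ω, hv₂⟩ := hdom2
  have hv₁only : ∀ u ∈ D, u ≠ c₁ → ¬H.Adj v₁ u :=
    fun u hu hne => hv₁ u (Finset.mem_erase.2 ⟨hne, hu⟩)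
  have hv₂only : ∀ u ∈ D, u ≠ c₂ → ¬H.Adj v₂ u :=
    fun u hu hne => hv₂ u (Finset.mem_erase.2 ⟨hne, hu⟩)
  have hv₁c₁ : H.Adj v₁ c₁ := by
    obtain ⟨u, huD, hadj⟩ := hdom v₁ hv₁Ω
    by_cases h : u = c₁
    · exact h ▸ hadj
    · exact absurd hadj (hv₁only u huD h)
  have hv₂c₂ : H.Adj v₂ c₂ := by
    obtain ⟨u, huD, hadj⟩ := hdom v₂ hv₂Ω
    by_cases h : u = c₂
    · exact h ▸ hadj
    · exact absurd hadj (hv₂only u huD h)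
  have hv1v2 : v₁ ≠ v₂ := by
    intro h
    exact hv₁only c₂ hc₂D hc₂c₁ (h ▸ hv₂c₂)
  have hv1v2adj : H.Adj v₁ v₂ := hcl hv₁Ω hv₂Ω hv1v2
  -- minimal walk from c₁ to c₂ within D
  obtain ⟨p, hplen, hpsupp⟩ := dIn_spec (hconn c₁ hc₁D c₂ hc₂D)
  obtain ⟨d, hd⟩ : ∃ dd : ℕ, dIn H D c₁ c₂ = dd := ⟨_, rfl⟩
  rw [hd] at hplen
  have hc₁c₂ : c₁ ≠ c₂ := fun h => hc₂c₁ h.symm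
  have hd1 : 1 ≤ d := by
    rcases Nat.eq_zero_or_pos d with h | h
    · exact absurd (eq_of_dIn_zero (hconn c₁ hc₁D c₂ hc₂D) (by rw [hd, h])) hc₁c₂
    · exact h
  have hgvD : ∀ i : ℕ, p.getVert i ∈ D := fun i => hpsupp _ (getVert_mem_support' p i)
  have hgv : ∀ i : ℕ, i ≤ d → dIn H D c₁ (p.getVert i) = i ∧ dIn H D (p.getVert i) c₂ = d - i := by
    intro i hi
    obtain ⟨q, hq1, hq2⟩ := walk_prefix p i rfl
    obtain ⟨r', hr1, hr2⟩ := walk_suffix p i rfl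
    have hplen' : p.length = d := hplen
    have hq1' : q.length = i := by rw [hq1, hplen']; omega
    have hul : dIn H D c₁ (p.getVert i) ≤ i := by
      have := dIn_le (fun t ht => hpsupp t (hq2 t ht))
      omega
    have hur : dIn H D (p.getVert i) c₂ ≤ d - i := by
      have := dIn_le (fun t ht => hpsupp t (hr2 t ht))
      rw [hr1, hplen'] at this
      exact this
    have hlow : d ≤ dIn H D c₁ (p.getVert i) + dIn H D (p.getVert i) c₂ := by
      obtain ⟨q₁, hq₁, hq₁D⟩ := dIn_spec (hconn c₁ hc₁D _ (hgvD i))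
      obtain ⟨q₂, hq₂, hq₂D⟩ := dIn_spec (hconn _ (hgvD i) c₂ hc₂D)
      have := dIn_le (p := q₁.append q₂) (fun t ht => by
        rw [Walk.mem_support_append_iff] at ht
        rcases ht with ht | ht
        · exact hq₁D t ht
        · exact hq₂D t ht)
      rw [Walk.length_append, hq₁, hq₂, hd] at this
      exact this
    omega
  have hgvinj : ∀ i j : ℕ, i ≤ d → j ≤ d → p.getVert i = p.getVert j → i = j := by
    intro i j hi hj h
    have h1 := (hgv i hi).1
    have h2 := (hgv j hj).1
    rw [h] at h1
    omega
  have hchord : ∀ i j : ℕ, i + 1 < j → j ≤ d → ¬H.Adj (p.getVert i) (p.getVert j) := by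
    intro i j hij hj hadj
    obtain ⟨q, hq1, hq2⟩ := walk_prefix p i rfl
    obtain ⟨r', hr1, hr2⟩ := walk_suffix p j rfl
    have hplen' : p.length = d := hplen
    have := dIn_le (p := q.append (Walk.cons hadj r')) (fun t ht => by
      rw [Walk.mem_support_append_iff] at ht
      rcases ht with ht | ht
      · exact hpsupp t (hq2 t ht)
      · rw [Walk.support_cons] at ht
        rcases List.mem_cons.1 ht with ht | ht
        · exact ht ▸ hgvD i
        · exact hpsupp t (hr2 t ht))
    rw [Walk.length_append, Walk.length_cons, hq1, hr1, hplen', hd] at this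
    omega
  have hgv0 : p.getVert 0 = c₁ := Walk.getVert_zero p
  have hgvd : p.getVert d = c₂ := by
    have := Walk.getVert_length p
    rwa [hplen] at this
  have hv₁p : ∀ i : ℕ, 1 ≤ i → i ≤ d → ¬H.Adj v₁ (p.getVert i) := by
    intro i h1 h2
    refine hv₁only _ (hgvD i) ?_
    intro h
    have := (hgv i h2).1
    rw [h] at this
    rw [dIn_self hc₁D] at this
    omega
  have hv₂p : ∀ i : ℕ, i < d → ¬H.Adj v₂ (p.getVert i) := by
    intro i h1
    refine hv₂only _ (hgvD i) ?_
    intro h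
    have := (hgv i (by omega)).1
    rw [h] at this
    have h2 := (hgv d le_rfl).1
    rw [hgvd] at h2
    omega
  have hv₁D : v₁ ∉ D := fun h => hdisj v₁ h hv₁Ω
  have hv₂D : v₂ ∉ D := fun h => hdisj v₂ h hv₂Ω
  -- the hole
  haveI : NeZero (d + 3) := ⟨by omega⟩
  set g : ℕ → V := fun x => if x ≤ d then p.getVert x else if x = d + 1 then v₂ else v₁ with hg
  have main : ∀ x y : ℕ, x < d + 3 → y < d + 3 → x ≤ y →
      (H.Adj (g x) (g y) ↔ (y = x + 1 ∨ (x = 0 ∧ y = d + 2))) := by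
    intro x y hx hy hxy
    by_cases hxd : x ≤ d
    · by_cases hyd : y ≤ d
      · simp only [hg, if_pos hxd, if_pos hyd]
        constructor
        · intro hadj
          rcases Nat.lt_or_ge x y with h | h
          · left
            by_contra h1
            exact hchord x y (by omega) hyd hadj
          · exfalso
            have : x = y := by omega
            rw [this] at hadj
            exact H.loopless.irrefl _ hadj
        · rintro (h | ⟨h0, h1⟩)
          · rw [h]
            exact Walk.adj_getVert_succ p (by omega)
          · omega
      · by_cases hyd1 : y = d + 1
        · simp only [hg, if_pos hxd, if_neg hyd, if_pos hyd1]
          constructor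
          · intro hadj
            left
            by_contra h
            have hxd' : x < d := by omega
            exact hv₂p x hxd' hadj.symm
          · rintro (h | ⟨h0, h1⟩)
            · have hxd2 : x = d := by omega
              rw [hxd2, hgvd]
              exact hv₂c₂.symm
            · omega
        · have hyd2 : y = d + 2 := by omega
          simp only [hg, if_pos hxd, if_neg hyd, if_neg hyd1]
          constructor
          · intro hadj
            right
            refine ⟨?_, by omega⟩
            by_contra h0
            exact hv₁p x (by omega) hxd hadj.symm
          · rintro (h | ⟨h0, h1⟩)
            · omega
            · rw [h0, hgv0]
              exact hv₁c₁.symm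
    · have hyd : ¬(y ≤ d) := by omega
      by_cases hx1 : x = d + 1
      · by_cases hy1 : y = d + 1
        · simp only [hg, if_neg hxd, if_pos hx1, if_neg hyd, if_pos hy1]
          constructor
          · intro hadj
            exact absurd hadj (H.loopless.irrefl _)
          · rintro (h | ⟨h0, h1⟩) <;> omega
        · have hy2 : y = d + 2 := by omega
          simp only [hg, if_neg hxd, if_pos hx1, if_neg hyd, if_neg hy1]
          constructor
          · intro _
            left
            omega
          · intro _
            exact hv1v2adj.symm
      · have hx2 : x = d + 2 := by omega
        have hy2 : y = d + 2 := by omega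
        simp only [hg, if_neg hxd, if_neg hx1, if_neg hyd, if_neg (by omega : ¬(y = d + 1))]
        constructor
        · intro hadj
          exact absurd hadj (H.loopless.irrefl _)
        · rintro (h | ⟨h0, h1⟩) <;> omega
  set f : ZMod (d + 3) → V := fun m => g m.val with hf
  have hvi : ∀ x : ZMod (d + 3), ((x.val : ℕ) : ZMod (d + 3)) = x := fun x => ZMod.natCast_rightInverse x
  have hval1 : (1 : ZMod (d + 3)).val = 1 := by
    rw [ZMod.val_one_eq_one_mod]
    exact Nat.mod_eq_of_lt (by omega)
  have hfinj : Function.Injective f := by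
    intro i j hfij
    have hi := ZMod.val_lt i
    have hj := ZMod.val_lt j
    have hij : i.val = j.val := by
      by_cases h1 : i.val ≤ d <;> by_cases h2 : j.val ≤ d
      · simp only [hf, hg, if_pos h1, if_pos h2] at hfij
        exact hgvinj _ _ h1 h2 hfij
      · exfalso
        by_cases h3 : j.val = d + 1
        · simp only [hf, hg, if_pos h1, if_neg h2, if_pos h3] at hfij
          exact hv₂D (hfij ▸ hgvD i.val)
        · simp only [hf, hg, if_pos h1, if_neg h2, if_neg h3] at hfij
          exact hv₁D (hfij ▸ hgvD i.val)
      · exfalso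
        by_cases h3 : i.val = d + 1
        · simp only [hf, hg, if_neg h1, if_pos h3, if_pos h2] at hfij
          exact hv₂D (hfij.symm ▸ hgvD j.val)
        · simp only [hf, hg, if_neg h1, if_neg h3, if_pos h2] at hfij
          exact hv₁D (hfij.symm ▸ hgvD j.val)
      · by_cases h3 : i.val = d + 1 <;> by_cases h4 : j.val = d + 1
        · omega
        · exfalso
          simp only [hf, hg, if_neg h1, if_pos h3, if_neg h2, if_neg h4] at hfij
          exact hv1v2 hfij.symm
        · exfalso
          simp only [hf, hg, if_neg h1, if_neg h3, if_neg h2, if_pos h4] at hfij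
          exact hv1v2 hfij
        · omega
    rw [← hvi i, ← hvi j, hij]
  have hiffZ : ∀ i j : ZMod (d + 3), H.Adj (f i) (f j) ↔ (j = i + 1 ∨ i = j + 1) := by
    have hlem : ∀ i j : ZMod (d + 3), i.val ≤ j.val →
        (H.Adj (f i) (f j) ↔ (j = i + 1 ∨ i = j + 1)) := by
      intro i j hij
      have hmain := main i.val j.val (ZMod.val_lt i) (ZMod.val_lt j) hij
      have hfi : f i = g i.val := rfl
      have hfj : f j = g j.val := rfl
      rw [hfi, hfj, hmain]
      constructor
      · rintro (h | ⟨h0, h1⟩)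
        · left
          rw [← hvi j, h]
          push_cast
          rw [hvi i]
        · right
          have hi0 : i = 0 := by
            rw [← hvi i, h0]
            simp
          have hjn : j = ((d + 2 : ℕ) : ZMod (d + 3)) := by rw [← hvi j, h1]
          rw [hi0, hjn]
          have : ((d + 2 : ℕ) : ZMod (d + 3)) + 1 = ((d + 3 : ℕ) : ZMod (d + 3)) := by
            rw [← Nat.cast_one, ← Nat.cast_add]
          rw [this, ZMod.natCast_self]
      · rintro (h | h)
        · have hjval : j.val = (i.val + 1) % (d + 3) := by
            rw [h, ZMod.val_add, hval1]
          rcases Nat.lt_or_ge (i.val + 1) (d + 3) with h2 | h2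
          · left
            rw [hjval, Nat.mod_eq_of_lt h2]
          · exfalso
            have hi2 : i.val = d + 2 := by
              have := ZMod.val_lt i
              omega
            rw [hi2] at hjval
            have h3 : (d + 2 + 1) % (d + 3) = 0 := by
              rw [show d + 2 + 1 = d + 3 from rfl, Nat.mod_self]
            rw [h3] at hjval
            have := ZMod.val_lt i
            omega
        · have hival : i.val = (j.val + 1) % (d + 3) := by
            rw [h, ZMod.val_add, hval1]
          rcases Nat.lt_or_ge (j.val + 1) (d + 3) with h2 | h2
          · exfalso
            rw [Nat.mod_eq_of_lt h2] at hival
            omega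
          · right
            have hjn : j.val = d + 2 := by
              have := ZMod.val_lt j
              omega
            have hi0 : i.val = 0 := by
              rw [hival, hjn, show d + 2 + 1 = d + 3 from rfl, Nat.mod_self]
            exact ⟨hi0, hjn⟩
    intro i j
    rcases le_total i.val j.val with h | h
    · exact hlem i j h
    · have := hlem j i h
      constructor
      · intro hadj
        rcases this.1 hadj.symm with h' | h'
        · exact Or.inr h'
        · exact Or.inl h'
      · intro hc
        have h2 : H.Adj (f j) (f i) := this.2 (by tauto)
        exact h2.symm
  exact hch ⟨d + 3, f, by omega, hfinj, hiffZ⟩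


/-! ### path helpers -/

lemma start_not_mem_dropUntil_support {G : SimpleGraph V} {a b : V} {p : G.Walk a b}
    (hp : p.IsPath) {v : V} (hv : v ∈ p.support) (hva : v ≠ a) :
    a ∉ (p.dropUntil v hv).support := by
  intro ha
  have hnd := hp.support_nodup
  have hsupp : p.support = (p.takeUntil v hv).support ++ (p.dropUntil v hv).support.tail := by
    rw [← Walk.support_append, p.take_spec hv]
  have ha' : a ∈ (p.dropUntil v hv).support.tail := by
    have hcons := Walk.support_eq_cons (p.dropUntil v hv)
    rw [hcons] at ha
    rcases List.mem_cons.1 ha with h | h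
    · exact absurd h.symm hva
    · exact h
  rw [hsupp] at hnd
  exact (List.disjoint_of_nodup_append hnd) (Walk.start_mem_support _) ha'

lemma end_not_mem_takeUntil_support {G : SimpleGraph V} {a b : V} {p : G.Walk a b}
    (hp : p.IsPath) {v : V} (hv : v ∈ p.support) (hvb : v ≠ b) :
    b ∉ (p.takeUntil v hv).support := by
  intro hb
  have hnd := hp.support_nodup
  have hsupp : p.support = (p.takeUntil v hv).support ++ (p.dropUntil v hv).support.tail := by
    rw [← Walk.support_append, p.take_spec hv]
  have hb' : b ∈ (p.dropUntil v hv).support.tail := by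
    have hbend : b ∈ (p.dropUntil v hv).support := Walk.end_mem_support _
    rw [Walk.support_eq_cons] at hbend
    rcases List.mem_cons.1 hbend with h | h
    · exact absurd h.symm hvb
    · exact h
  rw [hsupp] at hnd
  exact (List.disjoint_of_nodup_append hnd) hb hb'

lemma mem_cmp_of_support {G : SimpleGraph V} {Ω : Set V} {w u : V} {p : G.Walk w u}
    (hp : ∀ x ∈ p.support, x ∉ Ω) {t : V} (ht : t ∈ p.support) : t ∈ cmp G Ω w :=
  ⟨p.takeUntil t ht, fun x hx => hp x (Walk.support_takeUntil_subset _ _ hx)⟩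

/-! ### the boundary of a component of G − Ω is a minimal separator -/

lemma bdry_minsep {G H : SimpleGraph V} (hGH : G ≤ H) (hch : IsChordal H)
    (hmin : ∀ H' : SimpleGraph V, G ≤ H' → H' ≤ H → IsChordal H' → H' = H)
    {Ω : Set V} (hcl : H.IsClique Ω)
    (hmax : ∀ Ω' : Set V, H.IsClique Ω' → Ω ⊆ Ω' → Ω' = Ω)
    {w : V} (hw : w ∉ Ω) : MinSeparator G (bdry G Ω w) := by
  classical
  have hF2 : ∃ z ∈ Ω, z ∉ bdry G Ω w := by
    by_contra hcf
    push_neg at hcf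
    set D : Finset V := (cmp G Ω w).toFinset with hD
    have hmemD : ∀ x, x ∈ D ↔ x ∈ cmp G Ω w := by intro x; simp [hD]
    have hconn : ∀ x ∈ D, ∀ y ∈ D, (walkIn H D x y).Nonempty := by
      intro x hx y hy
      rw [hmemD] at hx hy
      obtain ⟨p₁, hp₁⟩ := hx
      obtain ⟨p₂, hp₂⟩ := hy
      obtain ⟨q, hq⟩ := walk_le hGH (p₁.reverse.append p₂)
      refine ⟨q.length, q, rfl, ?_⟩
      intro t ht
      rw [hq t, Walk.mem_support_append_iff] at ht
      rw [hmemD]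
      rcases ht with ht | ht
      · rw [Walk.support_reverse, List.mem_reverse] at ht
        exact mem_cmp_of_support hp₁ ht
      · exact mem_cmp_of_support hp₂ ht
    have hDne : D.Nonempty := ⟨w, (hmemD w).2 (mem_cmp_self hw)⟩
    have hdisj : ∀ x ∈ D, x ∉ Ω := fun x hx => cmp_not_mem ((hmemD x).1 hx)
    have hdom : ∀ v ∈ Ω, ∃ u ∈ D, H.Adj v u := by
      intro v hv
      obtain ⟨hnc, u, hu, hadj⟩ := hcf v hv
      exact ⟨u, (hmemD u).2 hu, hGH hadj.symm⟩
    obtain ⟨c, hcD, hcadj⟩ := dominating_clique hch hcl D hDne hconn hdisj hdom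
    have hclique : H.IsClique (insert c Ω) := hcl.insert (fun b hb _ => hcadj b hb)
    have heq := hmax (insert c Ω) hclique (Set.subset_insert c Ω)
    exact hdisj c hcD (heq ▸ Set.mem_insert c Ω)
  obtain ⟨z, hzΩ, hzb⟩ := hF2
  refine ⟨w, z, ⟨fun h => hw (bdry_subset h), hzb, ?_⟩, ?_⟩
  · intro p
    have hz' : z ∉ cmp G Ω w := fun h => cmp_not_mem h hzΩ
    exact exit_lemma p (mem_cmp_self hw) hz'
  · intro Y hY hYsep
    by_contra hne
    have hssub : ∃ v₀ ∈ bdry G Ω w, v₀ ∉ Y := by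
      by_contra hcf
      push_neg at hcf
      exact hne (Set.Subset.antisymm hY hcf)
    obtain ⟨v₀, hv₀b, hv₀Y⟩ := hssub
    have hv₀Ω : v₀ ∈ Ω := bdry_subset hv₀b
    have hv₀z : v₀ ≠ z := fun h => hzb (h ▸ hv₀b)
    obtain ⟨hv₀nc, u, hu, huv₀⟩ := hv₀b
    obtain ⟨p₁, hp₁⟩ := hu
    obtain ⟨p₂, hp₂⟩ := link_all hGH hch hmin hcl hv₀Ω hzΩ hv₀z
    have hYsub : Y ⊆ Ω := fun t ht => bdry_subset (hY ht)
    obtain ⟨t, ht, htY⟩ := hYsep.2.2 (p₁.append (Walk.cons huv₀ p₂))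
    rw [Walk.mem_support_append_iff] at ht
    rcases ht with ht | ht
    · exact (hp₁ t ht) (hYsub htY)
    · rw [Walk.support_cons] at ht
      rcases List.mem_cons.1 ht with ht | ht
      · exact (hp₁ u (Walk.end_mem_support p₁)) (hYsub (ht ▸ htY))
      · rcases hp₂ t ht with h | h | h
        · exact h (hYsub htY)
        · exact hv₀Y (h ▸ htY)
        · exact hzb (hY (h ▸ htY))

/-! ### cardinality of a bounded union -/

lemma ncard_biUnion_le (T : Set V) (g : V → Set V) (m : ℕ)
    (hg : ∀ u ∈ T, (g u).ncard ≤ m) :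
    (⋃ u ∈ T, g u).ncard ≤ T.ncard * m := by
  classical
  have hset : (⋃ u ∈ T, g u) = ↑(T.toFinset.biUnion (fun u => (g u).toFinset)) := by
    ext t
    simp [Set.mem_iUnion]
  rw [hset, Set.ncard_coe_finset]
  refine le_trans (Finset.card_biUnion_le) ?_
  have h1 : ∀ u ∈ T.toFinset, (g u).toFinset.card ≤ m := by
    intro u hu
    rw [← Set.ncard_eq_toFinset_card']
    exact hg u (Set.mem_toFinset.1 hu)
  calc ∑ u ∈ T.toFinset, (g u).toFinset.card ≤ T.toFinset.card * m := by
        refine le_trans (Finset.sum_le_card_nsmul _ _ m h1) ?_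
        simp [smul_eq_mul]
    _ = T.ncard * m := by rw [← Set.ncard_eq_toFinset_card']

end Stmt1

open Stmt1

/-- If `Ω` is a potential maximal clique of `G` with `|Ω| > (k-1)·s³`
(`k ≥ 2`, `s ≥ 1`), then `G` contains a clique of size `k` or a minimal separator of size
larger than `s`. -/
theorem statement1 (G : SimpleGraph V) (k s : ℕ) (hk : 2 ≤ k) (hs : 1 ≤ s)
    (Ω : Set V) (hΩ : IsPMC G Ω) (hcard : (k - 1) * s ^ 3 < Ω.ncard) :
    (∃ S : Finset V, G.IsNClique k S) ∨ (∃ X : Set V, MinSeparator G X ∧ s < X.ncard) := by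
  classical
  by_contra hcon
  push_neg at hcon
  obtain ⟨hnoclq, hsep⟩ := hcon
  obtain ⟨H, ⟨hGH, hch, hmin⟩, hcl, hmax⟩ := hΩ
  have hs3 : 1 ≤ s ^ 3 := Nat.one_le_pow _ _ hs
  have hΩk : k ≤ Ω.ncard := by
    have h1 : k - 1 ≤ (k - 1) * s ^ 3 := Nat.le_mul_of_pos_right _ (by omega)
    omega
  by_cases hGclq : G.IsClique Ω
  · obtain ⟨T, hT, hTcard⟩ := Finset.exists_subset_card_eq (s := Ω.toFinset) (n := k)
      (by rw [← Set.ncard_eq_toFinset_card']; exact hΩk)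
    refine hnoclq T ⟨hGclq.subset (fun t ht => ?_), hTcard⟩
    have := hT ht
    rwa [Set.mem_toFinset] at this
  · rw [SimpleGraph.isClique_iff, Set.Pairwise] at hGclq
    push_neg at hGclq
    obtain ⟨x, hx, y, hy, hxy, hnadj⟩ := hGclq
    have hbdry_le : ∀ u : V, u ∉ Ω → (bdry G Ω u).ncard ≤ s :=
      fun u hu => hsep _ (bdry_minsep hGH hch hmin hcl hmax hu)
    have hlink : ∀ {a b : V}, a ∈ Ω → b ∈ Ω → a ≠ b →
        ∃ p : G.Walk a b, p.IsPath ∧ ∀ t ∈ p.support, t ∉ Ω ∨ t = a ∨ t = b := by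
      intro a b ha hb hne
      obtain ⟨p, hp⟩ := link_all hGH hch hmin hcl ha hb hne
      exact ⟨p.bypass, Walk.bypass_isPath p, fun t ht => hp t (Walk.support_bypass_subset p ht)⟩
    obtain ⟨X, hXsep, hXmin⟩ := exists_minimal_sep hxy hnadj
    have hXs : X.ncard ≤ s := hsep X ⟨x, y, hXsep, hXmin⟩
    -- a boundary containing both x and y
    obtain ⟨p₀, hp₀path, hp₀⟩ := hlink hx hy hxy
    have hlen : p₀.length ≠ 0 := fun h => hxy (Walk.eq_of_length_eq_zero h)
    set u := p₀.getVert 1 with hudef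
    have hadjxu : G.Adj x u := by
      have := Walk.adj_getVert_succ p₀ (i := 0) (by omega)
      simpa using this
    have huy : u ≠ y := fun h => hnadj (h ▸ hadjxu)
    have hux : u ≠ x := fun h => G.loopless.irrefl x (h ▸ hadjxu)
    have huΩ : u ∉ Ω := by
      rcases hp₀ u (getVert_mem_support' p₀ 1) with h | h | h
      · exact h
      · exact absurd h hux
      · exact absurd h huy
    have hxbd : x ∈ bdry G Ω u :=
      ⟨fun h => cmp_not_mem h hx, u, mem_cmp_self huΩ, hadjxu.symm⟩
    have hybd : y ∈ bdry G Ω u := by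
      have humem : u ∈ p₀.support := getVert_mem_support' p₀ 1
      refine entry_lemma (w := u) (p₀.dropUntil u humem) hy (mem_cmp_self huΩ) ?_
      intro t ht
      rcases hp₀ t (Walk.support_dropUntil_subset _ _ ht) with h | h | h
      · exact Or.inl h
      · exfalso
        exact start_not_mem_dropUntil_support hp₀path humem hux (h ▸ ht)
      · exact Or.inr h
    have hpair : 2 ≤ (bdry G Ω u).ncard := by
      have hsub : ({x, y} : Set V) ⊆ bdry G Ω u := by
        intro t ht
        rcases ht with h | h
        · exact h ▸ hxbd
        · exact h ▸ hybd
      have := Set.ncard_le_ncard hsub (Set.toFinite _)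
      rwa [Set.ncard_pair hxy] at this
    rcases Nat.lt_or_ge s 2 with hs1 | hs2
    · have := hbdry_le u huΩ
      omega
    -- main counting, for s ≥ 2
    have hcover : Ω ⊆ ({x, y} : Set V) ∪ (X ∩ Ω) ∪ ⋃ t ∈ (X \ Ω), bdry G Ω t := by
      intro z hz
      by_cases hzx : z = x
      · exact Or.inl (Or.inl (by simp [hzx]))
      by_cases hzy : z = y
      · exact Or.inl (Or.inl (by simp [hzy]))
      by_cases hzX : z ∈ X
      · exact Or.inl (Or.inr ⟨hzX, hz⟩)
      obtain ⟨p₁, hp₁path, hp₁⟩ := hlink hx hz (fun h => hzx h.symm)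
      obtain ⟨p₂, hp₂path, hp₂⟩ := hlink hz hy hzy
      obtain ⟨t, ht, htX⟩ := hXsep.2.2 (p₁.append p₂)
      rw [Walk.mem_support_append_iff] at ht
      right
      rcases ht with ht | ht
      · have htx : t ≠ x := fun h => hXsep.1 (h ▸ htX)
        have htz : t ≠ z := fun h => hzX (h ▸ htX)
        have htΩ : t ∉ Ω := by
          rcases hp₁ t ht with h | h | h
          · exact h
          · exact absurd h htx
          · exact absurd h htz
        refine Set.mem_biUnion (⟨htX, htΩ⟩ : t ∈ X \ Ω) ?_
        refine entry_lemma (w := t) (p₁.dropUntil t ht) hz (mem_cmp_self htΩ) ?_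
        intro s' hs'
        rcases hp₁ s' (Walk.support_dropUntil_subset _ _ hs') with h | h | h
        · exact Or.inl h
        · exfalso
          exact start_not_mem_dropUntil_support hp₁path ht htx (h ▸ hs')
        · exact Or.inr h
      · have hty : t ≠ y := fun h => hXsep.2.1 (h ▸ htX)
        have htz : t ≠ z := fun h => hzX (h ▸ htX)
        have htΩ : t ∉ Ω := by
          rcases hp₂ t ht with h | h | h
          · exact h
          · exact absurd h htz
          · exact absurd h hty
        refine Set.mem_biUnion (⟨htX, htΩ⟩ : t ∈ X \ Ω) ?_
        refine entry_lemma (w := t) ((p₂.takeUntil t ht).reverse) hz (mem_cmp_self htΩ) ?_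
        intro s' hs'
        rw [Walk.support_reverse, List.mem_reverse] at hs'
        rcases hp₂ s' (Walk.support_takeUntil_subset _ _ hs') with h | h | h
        · exact Or.inl h
        · exact Or.inr h
        · exfalso
          exact end_not_mem_takeUntil_support hp₂path ht hty (h ▸ hs')
    have hcount : Ω.ncard ≤ 2 + s + s * s := by
      refine le_trans (Set.ncard_le_ncard hcover (Set.toFinite _)) ?_
      refine le_trans (Set.ncard_union_le _ _) ?_
      have h1 : (({x, y} : Set V) ∪ (X ∩ Ω)).ncard ≤ 2 + s := by
        refine le_trans (Set.ncard_union_le _ _) ?_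
        have h2 : ({x, y} : Set V).ncard = 2 := Set.ncard_pair hxy
        have h3 : (X ∩ Ω).ncard ≤ s :=
          le_trans (Set.ncard_le_ncard Set.inter_subset_left (Set.toFinite X)) hXs
        omega
      have h4 : (⋃ t ∈ (X \ Ω), bdry G Ω t).ncard ≤ s * s := by
        refine le_trans (ncard_biUnion_le _ _ s (fun t ht => hbdry_le t ht.2)) ?_
        have h5 : (X \ Ω).ncard ≤ s :=
          le_trans (Set.ncard_le_ncard Set.diff_subset (Set.toFinite X)) hXs
        exact Nat.mul_le_mul_right s h5
      omega
    -- arithmetic contradiction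
    have e1 : 2 * s ≤ s * s := by
      have := Nat.mul_le_mul_right s hs2
      simpa [two_mul] using this
    have e2 : 2 * (s * s) ≤ s * (s * s) := Nat.mul_le_mul_right (s * s) hs2
    have e3 : s ^ 3 = s * (s * s) := by ring
    have e4 : 1 * s ^ 3 ≤ (k - 1) * s ^ 3 := Nat.mul_le_mul_right _ (by omega)
    omega
end
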